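/- arXiv:1204.6605 — 10 statements merged into one kernel-verified Lean document; each statement's English description precedes it below -/
import Mathlib

section
/- Let q(x,ξ) = (Ax)·x + 2(Bx)·ξ + (Cξ)·ξ, where A and C are symmetric complex n×n matrices and B is a complex n×n matrix, let κ : ℝⁿ → ℝⁿ be linear with κ² = 1, and assume the PT-symmetry condition conj(q(κx, −κᵗξ)) = q(x,ξ) for all (x,ξ) ∈ ℝⁿ×ℝⁿ. Then the fundamental matrix F of q satisfies conj(F) = −K F K, where K is the 2n×2n real block matrix [[κ, 0],[0, −κᵗ]]; equivalently, F = −(K∘C)∘F∘(K∘C), where C : ℂ^{2n} → ℂ^{2n} is componentwise complex conjugation. -/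
open Matrix

/-- The complex quadratic form `q(x,ξ) = (Ax)·x + 2(Bx)·ξ + (Cξ)·ξ` on `ℝⁿ × ℝⁿ`. -/
noncomputable def quadForm (n : ℕ) (A B C : Matrix (Fin n) (Fin n) ℂ)
    (x ξ : Fin n → ℝ) : ℂ :=
  (A *ᵥ fun j => (x j : ℂ)) ⬝ᵥ (fun j => (x j : ℂ)) +
    2 * ((B *ᵥ fun j => (x j : ℂ)) ⬝ᵥ (fun j => (ξ j : ℂ))) +
    (C *ᵥ fun j => (ξ j : ℂ)) ⬝ᵥ (fun j => (ξ j : ℂ))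

section Aux

variable {n : ℕ}

/-- cast of a real vector to ℂ -/
noncomputable def cvec {n : ℕ} (x : Fin n → ℝ) : Fin n → ℂ := fun j => (x j : ℂ)

lemma quadForm_eq (A B C : Matrix (Fin n) (Fin n) ℂ) (x ξ : Fin n → ℝ) :
    quadForm n A B C x ξ = (A *ᵥ cvec x) ⬝ᵥ cvec x + 2 * ((B *ᵥ cvec x) ⬝ᵥ cvec ξ)
      + (C *ᵥ cvec ξ) ⬝ᵥ cvec ξ := rfl

lemma cvec_mulVec (κ : Matrix (Fin n) (Fin n) ℝ) (x : Fin n → ℝ) :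
    cvec (κ *ᵥ x) = (κ.map fun r => (r : ℂ)) *ᵥ cvec x := by
  funext j
  simp only [cvec, mulVec, dotProduct, map_apply]
  push_cast
  rfl

lemma cvec_neg (x : Fin n → ℝ) : cvec (-x) = -cvec x := by
  funext j; simp [cvec]

lemma cvec_zero : cvec (0 : Fin n → ℝ) = 0 := by
  funext j; simp [cvec]

lemma conj_dotProduct (u v : Fin n → ℂ) :
    starRingEnd ℂ (u ⬝ᵥ v) = (fun j => starRingEnd ℂ (u j)) ⬝ᵥ (fun j => starRingEnd ℂ (v j)) := by
  simp [dotProduct, map_sum]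

lemma conj_mulVec (M : Matrix (Fin n) (Fin n) ℂ) (u : Fin n → ℂ) :
    (fun j => starRingEnd ℂ ((M *ᵥ u) j)) = M.map (starRingEnd ℂ) *ᵥ fun j => starRingEnd ℂ (u j) := by
  funext j
  rw [RingHom.map_mulVec]
  rfl

lemma conj_cvec (x : Fin n → ℝ) : (fun j => starRingEnd ℂ (cvec x j)) = cvec x := by
  funext j; simp [cvec]

lemma map_conj_conj (M : Matrix (Fin n) (Fin n) ℂ) :
    (M.map (starRingEnd ℂ)).map (starRingEnd ℂ) = M := by
  ext i j; simp [Matrix.map_apply]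

lemma map_conj_neg (M : Matrix (Fin n) (Fin n) ℂ) :
    (-M).map (starRingEnd ℂ) = -(M.map (starRingEnd ℂ)) := by
  ext i j; simp [Matrix.map_apply]

/-- (M (N u)) ⬝ (P v) = ((Pᵀ M N) u) ⬝ v -/
lemma dv (M N P : Matrix (Fin n) (Fin n) ℂ) (u v : Fin n → ℂ) :
    (M *ᵥ (N *ᵥ u)) ⬝ᵥ (P *ᵥ v) = ((Pᵀ * M * N) *ᵥ u) ⬝ᵥ v := by
  rw [mulVec_mulVec, dotProduct_mulVec, ← mulVec_transpose, mulVec_mulVec, Matrix.mul_assoc]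

lemma bilin_ext (M : Matrix (Fin n) (Fin n) ℂ)
    (h : ∀ x ξ : Fin n → ℝ, (M *ᵥ cvec x) ⬝ᵥ cvec ξ = 0) : M = 0 := by
  ext i j
  have key := h (Pi.single j 1) (Pi.single i 1)
  have hx : cvec (Pi.single j (1:ℝ)) = Pi.single j (1:ℂ) := by
    funext k
    simp only [cvec, Pi.single_apply]
    split_ifs <;> simp
  have hξ : cvec (Pi.single i (1:ℝ)) = Pi.single i (1:ℂ) := by
    funext k
    simp only [cvec, Pi.single_apply]
    split_ifs <;> simp
  rw [hx, hξ, mulVec_single, dotProduct_single] at key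
  simpa using key

lemma quad_ext (M : Matrix (Fin n) (Fin n) ℂ) (hM : Mᵀ = M)
    (h : ∀ x : Fin n → ℝ, (M *ᵥ cvec x) ⬝ᵥ cvec x = 0) : M = 0 := by
  have key : ∀ i j : Fin n, (M *ᵥ Pi.single i (1:ℂ)) ⬝ᵥ Pi.single i 1
      + (M *ᵥ Pi.single i (1:ℂ)) ⬝ᵥ Pi.single j 1
      + (M *ᵥ Pi.single j (1:ℂ)) ⬝ᵥ Pi.single i 1
      + (M *ᵥ Pi.single j (1:ℂ)) ⬝ᵥ Pi.single j 1 = 0 := by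
    intro i j
    have h1 := h (Pi.single i 1 + Pi.single j 1)
    have hc : cvec (Pi.single i (1:ℝ) + Pi.single j 1)
        = Pi.single i (1:ℂ) + Pi.single j 1 := by
      funext k
      simp only [cvec, Pi.add_apply, Complex.ofReal_add, Pi.single_apply]
      split_ifs <;> simp
    rw [hc, mulVec_add, add_dotProduct, dotProduct_add, dotProduct_add] at h1
    linear_combination h1
  have hdiag : ∀ i : Fin n, M i i = 0 := by
    intro i
    have hk := key i i
    simp only [mulVec_single_one, col_def, transpose_apply, dotProduct_single, mul_one] at hk
    have h4 : (4 : ℂ) * M i i = 0 := by linear_combination hk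
    simpa using h4
  ext i j
  have hk := key j i
  simp only [mulVec_single_one, col_def, transpose_apply, dotProduct_single, mul_one] at hk
  rw [hdiag i, hdiag j] at hk
  have hsym : M j i = M i j := (congrFun (congrFun hM j) i).symm
  rw [hsym] at hk
  have h2 : (2:ℂ) * M i j = 0 := by linear_combination hk
  simpa using h2

end Aux

/-- under the PT-symmetry condition, the fundamental matrix
`F = [[B, C], [−A, −Bᵀ]]` of `q` satisfies `conj F = −K F K`, where
`K = [[κ, 0], [0, −κᵗ]]`. -/
theorem stmt_3 (n : ℕ) (A B C : Matrix (Fin n) (Fin n) ℂ)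
    (hA : Aᵀ = A) (hC : Cᵀ = C)
    (κ : Matrix (Fin n) (Fin n) ℝ) (hκ : κ * κ = 1)
    (hPT : ∀ x ξ : Fin n → ℝ,
        starRingEnd ℂ (quadForm n A B C (κ *ᵥ x) (-(κᵀ *ᵥ ξ))) = quadForm n A B C x ξ)
    (F : Matrix (Fin n ⊕ Fin n) (Fin n ⊕ Fin n) ℂ)
    (hF : F = Matrix.fromBlocks B C (-A) (-Bᵀ))
    (K : Matrix (Fin n ⊕ Fin n) (Fin n ⊕ Fin n) ℂ)
    (hK : K = Matrix.fromBlocks (κ.map fun r => (r : ℂ)) 0 0 (-(κ.map fun r => (r : ℂ))ᵀ)) :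
    F.map (starRingEnd ℂ) = -(K * F * K) := by
  set κc : Matrix (Fin n) (Fin n) ℂ := κ.map fun r => (r : ℂ) with hκc
  have hκct : (κᵀ).map (fun r => (r : ℂ)) = κcᵀ := by
    ext i j; simp [hκc]
  -- the PT condition as an identity of quadratic forms
  have hPT' : ∀ x ξ : Fin n → ℝ,
      quadForm n ((κcᵀ * A * κc).map (starRingEnd ℂ))
        (-((κc * B * κc).map (starRingEnd ℂ)))
        ((κc * C * κcᵀ).map (starRingEnd ℂ)) x ξ = quadForm n A B C x ξ := by
    intro x ξ
    rw [← hPT x ξ, quadForm_eq, quadForm_eq, cvec_mulVec, cvec_neg,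
      cvec_mulVec, hκct, ← hκc]
    simp only [mulVec_neg, neg_dotProduct, dotProduct_neg, neg_neg]
    rw [dv A κc κc (cvec x) (cvec x), dv B κc κcᵀ (cvec x) (cvec ξ),
      dv C κcᵀ κcᵀ (cvec ξ) (cvec ξ)]
    simp only [transpose_transpose]
    simp only [map_add, _root_.map_mul, map_neg, conj_dotProduct, conj_mulVec,
      conj_cvec, Complex.conj_ofNat, neg_mulVec, neg_dotProduct, mul_neg]
  -- extract the three matrix identities
  have hA2 : (κcᵀ * A * κc).map (starRingEnd ℂ) = A := by
    have hsymA : ((κcᵀ * A * κc).map (starRingEnd ℂ))ᵀ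
        = (κcᵀ * A * κc).map (starRingEnd ℂ) := by
      rw [← transpose_map, transpose_mul, transpose_mul, transpose_transpose,
        hA, Matrix.mul_assoc]
    have hz : ∀ x : Fin n → ℝ,
        (((κcᵀ * A * κc).map (starRingEnd ℂ) - A) *ᵥ cvec x) ⬝ᵥ cvec x = 0 := by
      intro x
      have h1 := hPT' x 0
      rw [quadForm_eq, quadForm_eq, cvec_zero] at h1
      simp only [mulVec_zero, dotProduct_zero, zero_dotProduct, mul_zero,
        add_zero] at h1
      rw [sub_mulVec, sub_dotProduct, h1, sub_self]
    have h0 := quad_ext _ (by rw [transpose_sub, hsymA, hA]) hz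
    exact sub_eq_zero.mp h0
  have hC2 : (κc * C * κcᵀ).map (starRingEnd ℂ) = C := by
    have hsymC : ((κc * C * κcᵀ).map (starRingEnd ℂ))ᵀ
        = (κc * C * κcᵀ).map (starRingEnd ℂ) := by
      rw [← transpose_map, transpose_mul, transpose_mul, transpose_transpose,
        hC, Matrix.mul_assoc]
    have hz : ∀ x : Fin n → ℝ,
        (((κc * C * κcᵀ).map (starRingEnd ℂ) - C) *ᵥ cvec x) ⬝ᵥ cvec x = 0 := by
      intro ξ
      have h1 := hPT' 0 ξ
      rw [quadForm_eq, quadForm_eq, cvec_zero] at h1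
      simp only [mulVec_zero, dotProduct_zero, zero_dotProduct, mul_zero,
        add_zero, zero_add] at h1
      rw [sub_mulVec, sub_dotProduct, h1, sub_self]
    have h0 := quad_ext _ (by rw [transpose_sub, hsymC, hC]) hz
    exact sub_eq_zero.mp h0
  have hB2 : -((κc * B * κc).map (starRingEnd ℂ)) = B := by
    have hz : ∀ x ξ : Fin n → ℝ,
        ((-((κc * B * κc).map (starRingEnd ℂ)) - B) *ᵥ cvec x) ⬝ᵥ cvec ξ = 0 := by
      intro x ξ
      have h1 := hPT' x ξ
      rw [quadForm_eq, quadForm_eq, hA2, hC2] at h1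
      have h2 : 2 * ((-((κc * B * κc).map (starRingEnd ℂ)) *ᵥ cvec x) ⬝ᵥ cvec ξ)
          = 2 * ((B *ᵥ cvec x) ⬝ᵥ cvec ξ) := by linear_combination h1
      have h3 := mul_left_cancel₀ (two_ne_zero (α := ℂ)) h2
      rw [sub_mulVec, sub_dotProduct, h3, sub_self]
    have h0 := bilin_ext _ hz
    exact sub_eq_zero.mp h0
  -- turn these into conjugation formulas
  have hAc : A.map (starRingEnd ℂ) = κcᵀ * A * κc := by
    conv_lhs => rw [← hA2]
    exact map_conj_conj _
  have hCc : C.map (starRingEnd ℂ) = κc * C * κcᵀ := by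
    conv_lhs => rw [← hC2]
    exact map_conj_conj _
  have hBc : B.map (starRingEnd ℂ) = -(κc * B * κc) := by
    conv_lhs => rw [← hB2]
    rw [map_conj_neg, map_conj_conj]
  have hBtc : Bᵀ.map (starRingEnd ℂ) = -(κcᵀ * Bᵀ * κcᵀ) := by
    have := congrArg Matrix.transpose hBc
    rw [← transpose_map] at this
    rw [this, transpose_neg, transpose_mul, transpose_mul, Matrix.mul_assoc]
  -- conclude
  rw [hF, hK, Matrix.fromBlocks_map, map_conj_neg, map_conj_neg, hAc, hBc, hCc, hBtc,
    Matrix.fromBlocks_multiply, Matrix.fromBlocks_multiply]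
  simp only [Matrix.zero_mul, Matrix.mul_zero, Matrix.neg_mul, Matrix.mul_neg,
    neg_neg, neg_zero, add_zero, zero_add, Matrix.fromBlocks_neg, Matrix.mul_assoc]
end

section
/- Let A₊ be a symmetric complex n×n matrix whose entrywise imaginary part Im A₊ (a real symmetric matrix) is positive definite. Then the matrix I − iA₊ is invertible, and the matrix B := (I − iA₊)⁻¹ A₊ is symmetric and satisfies B = A₊ (I − iA₊)⁻¹. -/
open Matrix

lemma antisym_sum (n : ℕ) (g : Fin n → Fin n → ℝ) (hg : ∀ i j, g i j = - g j i) :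
    ∑ i, ∑ j, g i j = 0 := by
  have h : ∑ i, ∑ j, g i j = ∑ i, ∑ j, -(g i j) := by
    rw [Finset.sum_comm]
    exact Finset.sum_congr rfl fun j _ => Finset.sum_congr rfl fun i _ => (hg i j).symm ▸ rfl
  simp only [Finset.sum_neg_distrib] at h
  linarith

lemma key (n : ℕ) (A : Matrix (Fin n) (Fin n) ℂ) (hA : Aᵀ = A)
    (hIm : (Matrix.of fun i j => (A i j).im).PosDef) :
    IsUnit (1 - Complex.I • A) := by
  set B : Matrix (Fin n) (Fin n) ℝ := Matrix.of fun i j => (A i j).im with hB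
  rw [← Matrix.mulVec_injective_iff_isUnit]
  intro x y hxy
  rw [← sub_eq_zero, ← Matrix.mulVec_sub] at hxy
  rw [← sub_eq_zero]
  set z := x - y with hz
  clear_value z
  by_contra hz0
  -- z = I • (A *ᵥ z)
  rw [Matrix.sub_mulVec, Matrix.one_mulVec, Matrix.smul_mulVec, sub_eq_zero] at hxy
  set s : ℂ := Finset.univ.sum fun i => (starRingEnd ℂ) (z i) * (A *ᵥ z) i with hs
  -- first: s.im = u Q u + v Q v
  set u : Fin n → ℝ := fun i => (z i).re with hu
  set v : Fin n → ℝ := fun i => (z i).im with hv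
  have him : s.im = u ⬝ᵥ (B *ᵥ u) + v ⬝ᵥ (B *ᵥ v) := by
    have : s.im = ∑ i, ∑ j, ((starRingEnd ℂ) (z i) * (A i j * z j)).im := by
      rw [hs, Complex.im_sum]
      refine Finset.sum_congr rfl fun i _ => ?_
      rw [Matrix.mulVec, dotProduct, Finset.mul_sum, Complex.im_sum]
    rw [this]
    have expand : ∀ i j, ((starRingEnd ℂ) (z i) * (A i j * z j)).im
        = B i j * (u i * u j + v i * v j) + (A i j).re * (u i * v j - v i * u j) := by
      intro i j
      simp only [Complex.mul_im, Complex.mul_re, Complex.conj_re, Complex.conj_im, hB,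
        Matrix.of_apply, hu, hv]
      ring
    simp only [expand]
    simp only [Finset.sum_add_distrib]
    have h2 : ∑ i, ∑ j, (A i j).re * (u i * v j - v i * u j) = 0 := by
      refine antisym_sum n _ fun i j => ?_
      have : A j i = A i j := by conv_lhs => rw [← hA, Matrix.transpose_apply]
      rw [this]; ring
    rw [h2, add_zero]
    simp only [dotProduct, Matrix.mulVec, Finset.mul_sum]
    rw [← Finset.sum_add_distrib]
    refine Finset.sum_congr rfl fun i _ => ?_
    rw [← Finset.sum_add_distrib]
    refine Finset.sum_congr rfl fun j _ => ?_
    ring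
  -- s.im > 0
  have hq : ∀ w : Fin n → ℝ, 0 ≤ w ⬝ᵥ (B *ᵥ w) := fun w => by
    simpa using hIm.posSemidef.dotProduct_mulVec_nonneg w
  have hqpos : ∀ w : Fin n → ℝ, w ≠ 0 → 0 < w ⬝ᵥ (B *ᵥ w) := fun w hw => by
    simpa using hIm.dotProduct_mulVec_pos hw
  have huv : u ≠ 0 ∨ v ≠ 0 := by
    by_contra hc
    push_neg at hc
    apply hz0
    funext i
    exact Complex.ext (congrFun hc.1 i) (congrFun hc.2 i)
  have hspos : 0 < s.im := by
    rw [him]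
    rcases huv with h | h
    · have := hqpos u h; have := hq v; linarith
    · have := hqpos v h; have := hq u; linarith
  -- s.im ≤ 0
  have hzi : ∀ i, z i = Complex.I * (A *ᵥ z) i := fun i => by
    conv_lhs => rw [hxy]
    simp [Pi.smul_apply]
  have heq : ∑ i, (starRingEnd ℂ) (z i) * z i = Complex.I * s := by
    rw [hs, Finset.mul_sum]
    refine Finset.sum_congr rfl fun i _ => ?_
    calc (starRingEnd ℂ) (z i) * z i
        = (starRingEnd ℂ) (z i) * (Complex.I * (A *ᵥ z) i) := by rw [← hzi i]
      _ = Complex.I * ((starRingEnd ℂ) (z i) * (A *ᵥ z) i) := by ring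
  have h1 : (∑ i, (starRingEnd ℂ) (z i) * z i).im = 0 := by
    rw [Complex.im_sum]
    refine Finset.sum_eq_zero fun i _ => ?_
    simp [Complex.mul_im]
    ring
  have h2 : 0 ≤ (∑ i, (starRingEnd ℂ) (z i) * z i).re := by
    rw [Complex.re_sum]
    refine Finset.sum_nonneg fun i _ => ?_
    simp [Complex.mul_re]
    nlinarith [sq_nonneg (z i).re, sq_nonneg (z i).im]
  rw [heq] at h2
  simp [Complex.mul_re] at h2
  linarith

/-- if `A₊` is a symmetric complex matrix with `Im A₊` positive definite,
then `I − iA₊` is invertible, and `B = (I − iA₊)⁻¹ A₊` is symmetric and also equals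
`A₊ (I − iA₊)⁻¹`. -/
theorem stmt_6 (n : ℕ) (A : Matrix (Fin n) (Fin n) ℂ) (hA : Aᵀ = A)
    (hIm : (Matrix.of fun i j => (A i j).im).PosDef) :
    IsUnit (1 - Complex.I • A) ∧
    ((1 - Complex.I • A)⁻¹ * A)ᵀ = (1 - Complex.I • A)⁻¹ * A ∧
    (1 - Complex.I • A)⁻¹ * A = A * (1 - Complex.I • A)⁻¹ := by
  have hU : IsUnit (1 - Complex.I • A) := key n A hA hIm
  set M := 1 - Complex.I • A with hM
  have hdet : IsUnit M.det := (Matrix.isUnit_iff_isUnit_det M).mp hU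
  have hMT : Mᵀ = M := by
    rw [hM, Matrix.transpose_sub, Matrix.transpose_one, Matrix.transpose_smul, hA]
  have hcomm : A * M = M * A := by
    rw [hM]
    simp only [Matrix.mul_sub, Matrix.sub_mul, Matrix.mul_one, Matrix.one_mul,
      Matrix.mul_smul, Matrix.smul_mul]
  have hcomm' : M⁻¹ * A = A * M⁻¹ := by
    calc M⁻¹ * A = M⁻¹ * (A * (M * M⁻¹)) := by rw [Matrix.mul_nonsing_inv M hdet, Matrix.mul_one]
      _ = M⁻¹ * ((A * M) * M⁻¹) := by rw [Matrix.mul_assoc]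
      _ = M⁻¹ * (M * (A * M⁻¹)) := by rw [hcomm, Matrix.mul_assoc]
      _ = (M⁻¹ * M) * (A * M⁻¹) := by rw [Matrix.mul_assoc]
      _ = A * M⁻¹ := by rw [Matrix.nonsing_inv_mul M hdet, Matrix.one_mul]
  refine ⟨hU, ?_, hcomm'⟩
  rw [Matrix.transpose_mul, Matrix.transpose_nonsing_inv, hMT, hA, hcomm']
end

section
/- Let A₊ be a symmetric complex n×n matrix with Im A₊ positive definite, and let B = (I − iA₊)⁻¹ A₊. Define the complex linear map κ_T : ℂ^{2n} → ℂ^{2n} by κ_T(y,η) = (y − iη, η + iBη − By). Then: (i) κ_T is symplectic, i.e. σ(κ_T Z, κ_T W) = σ(Z, W) for all Z, W ∈ ℂ^{2n}; (ii) κ_T maps the subspace Λ⁻ = {(y, −iy) : y ∈ ℂⁿ} bijectively onto {(x,ξ) ∈ ℂ^{2n} : x = 0}; and (iii) κ_T maps the subspace Λ⁺ = {(y, A₊y) : y ∈ ℂⁿ} bijectively onto {(x,ξ) ∈ ℂ^{2n} : ξ = 0}. -/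
open Matrix

lemma det_ne (n : ℕ) (A : Matrix (Fin n) (Fin n) ℂ) (hA : Aᵀ = A)
    (hIm : (Matrix.of fun i j => (A i j).im).PosDef) :
    (1 - Complex.I • A).det ≠ 0 := by
  intro hdet
  obtain ⟨v, hv, hMv⟩ := (Matrix.exists_mulVec_eq_zero_iff).2 hdet
  have hveq : v = Complex.I • (A *ᵥ v) := by
    have := hMv
    rw [Matrix.sub_mulVec, Matrix.one_mulVec, Matrix.smul_mulVec, sub_eq_zero] at this
    exact this
  set p : Fin n → ℝ := fun i => (v i).re with hp
  set q : Fin n → ℝ := fun i => (v i).im with hq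
  set IA : Matrix (Fin n) (Fin n) ℝ := Matrix.of fun i j => (A i j).im with hIA
  have hAsym : ∀ i j, A j i = A i j := fun i j => by
    simpa using congrFun (congrFun hA i) j
  have him : (∑ i, (starRingEnd ℂ) (v i) * (A *ᵥ v) i).im
      = p ⬝ᵥ (IA *ᵥ p) + q ⬝ᵥ (IA *ᵥ q) := by
    have expand : ∀ i, (starRingEnd ℂ) (v i) * (A *ᵥ v) i
        = ∑ j, (starRingEnd ℂ) (v i) * (A i j * v j) := by
      intro i
      rw [Matrix.mulVec, dotProduct, Finset.mul_sum]
    simp only [expand, Complex.im_sum]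
    have split : ∀ i j, ((starRingEnd ℂ) (v i) * (A i j * v j)).im
        = (A i j).re * (p i * q j - q i * p j)
          + (A i j).im * (p i * p j + q i * q j) := by
      intro i j
      simp [Complex.mul_im, Complex.mul_re, hp, hq]
      ring
    simp only [split, Finset.sum_add_distrib]
    have anti : (∑ i, ∑ j, (A i j).re * (p i * q j - q i * p j)) = 0 := by
      have h2 : ((∑ i, ∑ j, (A i j).re * (p i * q j - q i * p j))
          + ∑ i, ∑ j, (A j i).re * (p j * q i - q j * p i)) = 0 := by
        rw [← Finset.sum_add_distrib]
        apply Finset.sum_eq_zero; intro i _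
        rw [← Finset.sum_add_distrib]
        apply Finset.sum_eq_zero; intro j _
        rw [hAsym i j]; ring
      have h3 : (∑ i, ∑ j, (A j i).re * (p j * q i - q j * p i))
          = ∑ i, ∑ j, (A i j).re * (p i * q j - q i * p j) := by rw [Finset.sum_comm]
      rw [h3] at h2
      linarith
    rw [anti, zero_add]
    have hquad : ∀ x : Fin n → ℝ, x ⬝ᵥ (IA *ᵥ x) = ∑ i, ∑ j, (A i j).im * (x i * x j) := by
      intro x
      simp only [hIA, Matrix.mulVec, dotProduct, Matrix.of_apply, Finset.mul_sum]
      exact Finset.sum_congr rfl fun i _ => Finset.sum_congr rfl fun j _ => by ring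
    rw [hquad p, hquad q, ← Finset.sum_add_distrib]
    apply Finset.sum_congr rfl; intro i _
    rw [← Finset.sum_add_distrib]
    apply Finset.sum_congr rfl; intro j _; ring
  have hpos : 0 < p ⬝ᵥ (IA *ᵥ p) + q ⬝ᵥ (IA *ᵥ q) := by
    have hsemi := hIm.posSemidef
    have hpq : p ≠ 0 ∨ q ≠ 0 := by
      by_contra h
      push_neg at h
      apply hv
      funext i
      have h1 := congrFun h.1 i
      have h2 := congrFun h.2 i
      exact Complex.ext (by simpa [hp] using h1) (by simpa [hq] using h2)
    have h1 : ∀ x : Fin n → ℝ, 0 ≤ x ⬝ᵥ (IA *ᵥ x) := fun x => by simpa using hsemi.dotProduct_mulVec_nonneg x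
    rcases hpq with h | h
    · have ha := hIm.dotProduct_mulVec_pos h
      simp only [star_trivial] at ha
      have := h1 q
      linarith
    · have ha := hIm.dotProduct_mulVec_pos h
      simp only [star_trivial] at ha
      have := h1 p
      linarith
  have key : (∑ i, (starRingEnd ℂ) (v i) * v i)
      = Complex.I * ∑ i, (starRingEnd ℂ) (v i) * (A *ᵥ v) i := by
    rw [Finset.mul_sum]
    apply Finset.sum_congr rfl; intro i _
    have hvi := congrFun hveq i
    simp only [Pi.smul_apply, smul_eq_mul] at hvi
    nth_rewrite 2 [hvi]
    ring
  have hre : (∑ i, (starRingEnd ℂ) (v i) * v i).re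
      = 0 - (p ⬝ᵥ (IA *ᵥ p) + q ⬝ᵥ (IA *ᵥ q)) := by
    rw [key, Complex.mul_re]
    simp [him]
  have hge : 0 ≤ (∑ i, (starRingEnd ℂ) (v i) * v i).re := by
    rw [Complex.re_sum]
    apply Finset.sum_nonneg; intro i _
    simp only [Complex.mul_re, Complex.conj_re, Complex.conj_im]
    nlinarith [sq_nonneg (v i).re, sq_nonneg (v i).im]
  rw [hre] at hge
  linarith

/-- The standard complex symplectic form `σ((x,ξ),(y,η)) = ξ·y − η·x` on `ℂ^{2n}`. -/
noncomputable def sigmaC (n : ℕ) (X Y : (Fin n → ℂ) × (Fin n → ℂ)) : ℂ :=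
  ∑ j, X.2 j * Y.1 j - ∑ j, Y.2 j * X.1 j

/-- with `B = (I − iA₊)⁻¹A₊`, the map
`κ_T(y,η) = (y − iη, η + iBη − By)` is symplectic, maps `Λ⁻ = {(y,−iy)}` bijectively onto
`{x = 0}` and `Λ⁺ = {(y, A₊y)}` bijectively onto `{ξ = 0}`. -/
theorem stmt_7 (n : ℕ) (A : Matrix (Fin n) (Fin n) ℂ) (hA : Aᵀ = A)
    (hIm : (Matrix.of fun i j => (A i j).im).PosDef)
    (B : Matrix (Fin n) (Fin n) ℂ) (hB : B = (1 - Complex.I • A)⁻¹ * A)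
    (κT : (Fin n → ℂ) × (Fin n → ℂ) → (Fin n → ℂ) × (Fin n → ℂ))
    (hκT : ∀ p, κT p =
      (p.1 - Complex.I • p.2, p.2 + Complex.I • (B *ᵥ p.2) - B *ᵥ p.1)) :
    (∀ Z W, sigmaC n (κT Z) (κT W) = sigmaC n Z W) ∧
    Set.BijOn κT {p : (Fin n → ℂ) × (Fin n → ℂ) | p.2 = (-Complex.I) • p.1}
      {p : (Fin n → ℂ) × (Fin n → ℂ) | p.1 = 0} ∧
    Set.BijOn κT {p : (Fin n → ℂ) × (Fin n → ℂ) | p.2 = A *ᵥ p.1}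
      {p : (Fin n → ℂ) × (Fin n → ℂ) | p.2 = 0} := by
  set M : Matrix (Fin n) (Fin n) ℂ := 1 - Complex.I • A with hM
  have hdet : IsUnit M.det := isUnit_iff_ne_zero.2 (det_ne n A hA hIm)
  have hcomm : A * M = M * A := by
    rw [hM, Matrix.mul_sub, Matrix.sub_mul, Matrix.mul_one, Matrix.one_mul,
      Matrix.mul_smul, Matrix.smul_mul]
  have hBM : B * M = A := by
    rw [hB, Matrix.mul_assoc, hcomm, ← Matrix.mul_assoc,
      Matrix.nonsing_inv_mul M hdet, Matrix.one_mul]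
  have hBeq : B = A * M⁻¹ := by
    rw [← hBM, Matrix.mul_assoc, Matrix.mul_nonsing_inv M hdet, Matrix.mul_one]
  have hMT : Mᵀ = M := by
    rw [hM, Matrix.transpose_sub, Matrix.transpose_one, Matrix.transpose_smul, hA]
  have hBT : Bᵀ = B := by
    conv_lhs => rw [hB]
    rw [Matrix.transpose_mul, hA, Matrix.transpose_nonsing_inv, hMT, ← hBeq]
  -- symmetric dot product lemma
  have dsym : ∀ u w : Fin n → ℂ, u ⬝ᵥ (B *ᵥ w) = (B *ᵥ u) ⬝ᵥ w := by
    intro u w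
    rw [Matrix.dotProduct_mulVec, ← Matrix.mulVec_transpose, hBT]
  refine ⟨?_, ?_, ?_⟩
  · -- symplectic
    intro Z W
    obtain ⟨y, η⟩ := Z
    obtain ⟨y', η'⟩ := W
    show sigmaC n (κT (y, η)) (κT (y', η')) = sigmaC n (y, η) (y', η')
    have hdp : ∀ X Y : (Fin n → ℂ) × (Fin n → ℂ),
        sigmaC n X Y = X.2 ⬝ᵥ Y.1 - Y.2 ⬝ᵥ X.1 := fun X Y => rfl
    rw [hdp, hdp, hκT, hκT]
    have hB2 : ∀ u w : Fin n → ℂ, (B *ᵥ u) ⬝ᵥ w = (B *ᵥ w) ⬝ᵥ u := fun u w => by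
      rw [← dsym, dotProduct_comm]
    simp only [add_dotProduct, sub_dotProduct, dotProduct_add, dotProduct_sub,
      smul_dotProduct, dotProduct_smul, smul_eq_mul]
    rw [hB2 η y', hB2 η η', hB2 y y', hB2 y η', dotProduct_comm η' η]
    ring
  · -- Λ⁻ onto {x = 0}
    have himg : ∀ y : Fin n → ℂ, κT (y, (-Complex.I) • y) = (0, (-Complex.I) • y) := by
      intro y
      rw [hκT]
      refine Prod.ext ?_ ?_
      · show y - Complex.I • ((-Complex.I) • y) = 0
        rw [smul_smul]
        simp [mul_neg, Complex.I_mul_I]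
      · show (-Complex.I) • y + Complex.I • (B *ᵥ ((-Complex.I) • y)) - B *ᵥ y
            = (-Complex.I) • y
        rw [Matrix.mulVec_smul, smul_smul]
        simp [mul_neg, Complex.I_mul_I]
    constructor
    · intro p hp
      obtain ⟨y, η⟩ := p
      simp only [Set.mem_setOf_eq] at hp ⊢
      rw [show ((y, η) : _ × _) = (y, (-Complex.I) • y) by rw [hp], himg]
    refine ⟨?_, ?_⟩
    · intro p hp p' hp' heq
      obtain ⟨y, η⟩ := p
      obtain ⟨y', η'⟩ := p'
      simp only [Set.mem_setOf_eq] at hp hp'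
      rw [show ((y, η) : _ × _) = (y, (-Complex.I) • y) by rw [hp],
        show ((y', η') : _ × _) = (y', (-Complex.I) • y') by rw [hp'],
        himg, himg] at heq
      have h2 : (-Complex.I) • y = (-Complex.I) • y' := congrArg Prod.snd heq
      have hy : y = y' := by
        have := congrArg (fun v => (Complex.I : ℂ) • v) h2
        simpa [smul_smul, Complex.I_mul_I] using this
      rw [hp, hp', hy]
    · intro q hq
      simp only [Set.mem_setOf_eq] at hq
      refine ⟨(Complex.I • q.2, (-Complex.I) • (Complex.I • q.2)), ?_, ?_⟩
      · simp [Set.mem_setOf_eq]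
      · rw [himg]
        have : (-Complex.I) • (Complex.I • q.2) = q.2 := by
          simp [smul_smul, Complex.I_mul_I]
        rw [this]
        exact Prod.ext hq.symm rfl
  · -- Λ⁺ onto {ξ = 0}
    have himg : ∀ y : Fin n → ℂ, κT (y, A *ᵥ y) = (M *ᵥ y, 0) := by
      intro y
      rw [hκT]
      refine Prod.ext ?_ ?_
      · show y - Complex.I • (A *ᵥ y) = M *ᵥ y
        rw [hM, Matrix.sub_mulVec, Matrix.one_mulVec, Matrix.smul_mulVec]
      · show A *ᵥ y + Complex.I • (B *ᵥ (A *ᵥ y)) - B *ᵥ y = 0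
        have h1 : B *ᵥ (M *ᵥ y) = A *ᵥ y := by
          rw [Matrix.mulVec_mulVec, hBM]
        have h2 : B *ᵥ (M *ᵥ y) = B *ᵥ y - Complex.I • (B *ᵥ (A *ᵥ y)) := by
          rw [hM, Matrix.sub_mulVec, Matrix.one_mulVec, Matrix.smul_mulVec,
            Matrix.mulVec_sub, Matrix.mulVec_smul]
        rw [h2] at h1
        nth_rewrite 1 [← h1]
        abel
    have hMinj : ∀ y y' : Fin n → ℂ, M *ᵥ y = M *ᵥ y' → y = y' := by
      intro y y' h
      have := congrArg (fun v => M⁻¹ *ᵥ v) h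
      simpa [Matrix.mulVec_mulVec, Matrix.nonsing_inv_mul M hdet, Matrix.one_mulVec] using this
    constructor
    · intro p hp
      obtain ⟨y, η⟩ := p
      simp only [Set.mem_setOf_eq] at hp ⊢
      rw [show ((y, η) : _ × _) = (y, A *ᵥ y) by rw [hp], himg]
    refine ⟨?_, ?_⟩
    · intro p hp p' hp' heq
      obtain ⟨y, η⟩ := p
      obtain ⟨y', η'⟩ := p'
      simp only [Set.mem_setOf_eq] at hp hp'
      rw [show ((y, η) : _ × _) = (y, A *ᵥ y) by rw [hp],
        show ((y', η') : _ × _) = (y', A *ᵥ y') by rw [hp'],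
        himg, himg] at heq
      have hy : y = y' := hMinj y y' (congrArg Prod.fst heq)
      rw [hp, hp', hy]
    · intro q hq
      simp only [Set.mem_setOf_eq] at hq
      refine ⟨(M⁻¹ *ᵥ q.1, A *ᵥ (M⁻¹ *ᵥ q.1)), rfl, ?_⟩
      rw [himg]
      have : M *ᵥ (M⁻¹ *ᵥ q.1) = q.1 := by
        rw [Matrix.mulVec_mulVec, Matrix.mul_nonsing_inv M hdet, Matrix.one_mulVec]
      rw [this]
      exact Prod.ext rfl hq.symm
end

section
/- Let Σ ⊂ ℂ^{2n} be a real-linear subspace of real dimension 2n with Σ ∩ iΣ = {0}, and suppose that σ takes real values on Σ × Σ and that the restriction of σ to Σ is nondegenerate. Let ι : ℂ^{2n} → ℂ^{2n} be the unique conjugate-linear map restricting to the identity on Σ. Let Λ ⊆ ℂ^{2n} be a complex Lagrangian plane, and define the Hermitian form b(ρ,μ) = (1/i)·σ(ρ, ι(μ)) on Λ × Λ. Then b is nondegenerate if and only if Λ ∩ Σ = {0}. -/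
/-- `sigmaC` as a bilinear form. -/
noncomputable def sigmaB (n : ℕ) :
    LinearMap.BilinForm ℂ ((Fin n → ℂ) × (Fin n → ℂ)) :=
  LinearMap.mk₂ ℂ (sigmaC n)
    (by intro x x' y; simp [sigmaC, mul_add, add_mul, Finset.sum_add_distrib]; ring)
    (by intro c x y; simp [sigmaC, Finset.mul_sum, mul_sub, mul_comm, mul_left_comm, mul_assoc])
    (by intro x y y'; simp [sigmaC, mul_add, add_mul, Finset.sum_add_distrib]; ring)
    (by intro c x y; simp [sigmaC, Finset.mul_sum, mul_sub, mul_comm, mul_left_comm, mul_assoc])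

lemma sigmaB_apply (n : ℕ) (X Y : (Fin n → ℂ) × (Fin n → ℂ)) :
    sigmaB n X Y = sigmaC n X Y := rfl

lemma sigmaB_alt (n : ℕ) : (sigmaB n).IsAlt := by
  intro X; simp [sigmaB_apply, sigmaC]

lemma sigmaB_nondeg (n : ℕ) : (sigmaB n).Nondegenerate := by
  refine (LinearMap.IsRefl.nondegenerate_iff_separatingLeft (sigmaB_alt n).isRefl).mpr ?_
  intro X hX
  have h1 : ∀ j, X.2 j = 0 := by
    intro j
    have := hX (Pi.single j 1, 0)
    simpa [sigmaB_apply, sigmaC, Pi.single_apply] using this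
  have h2 : ∀ j, X.1 j = 0 := by
    intro j
    have := hX (0, Pi.single j 1)
    simpa [sigmaB_apply, sigmaC, Pi.single_apply] using this
  ext j
  · exact h2 j
  · exact h1 j

/-- let `Σ ⊂ ℂ²ⁿ` be a maximal totally real subspace on which `σ` is real
and nondegenerate, `ι` the conjugate-linear involution fixing `Σ`, `Λ` a complex
Lagrangian plane, and `b(ρ,μ) = (1/i)σ(ρ, ι(μ))` the associated Hermitian form on `Λ`.
Then `b` is nondegenerate iff `Λ ∩ Σ = {0}`. -/
theorem stmt_10 (n : ℕ) (Sig : Submodule ℝ ((Fin n → ℂ) × (Fin n → ℂ)))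
    (hdim : Module.finrank ℝ Sig = 2 * n)
    (htotreal : ∀ v ∈ Sig, Complex.I • v ∈ Sig → v = 0)
    (hreal : ∀ X ∈ Sig, ∀ Y ∈ Sig, (sigmaC n X Y).im = 0)
    (hnondeg : ∀ X ∈ Sig, (∀ Y ∈ Sig, sigmaC n X Y = 0) → X = 0)
    (ι : ((Fin n → ℂ) × (Fin n → ℂ)) →ₛₗ[starRingEnd ℂ] ((Fin n → ℂ) × (Fin n → ℂ)))
    (hι : ∀ v ∈ Sig, ι v = v)
    (Λ : Submodule ℂ ((Fin n → ℂ) × (Fin n → ℂ)))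
    (hΛdim : Module.finrank ℂ Λ = n)
    (hΛlag : ∀ X ∈ Λ, ∀ Y ∈ Λ, sigmaC n X Y = 0)
    (b : ((Fin n → ℂ) × (Fin n → ℂ)) → ((Fin n → ℂ) × (Fin n → ℂ)) → ℂ)
    (hb : ∀ ρ μ, b ρ μ = 1 / Complex.I * sigmaC n ρ (ι μ)) :
    (∀ ρ ∈ Λ, (∀ μ ∈ Λ, b ρ μ = 0) → ρ = 0) ↔ (∀ v ∈ Λ, v ∈ Sig → v = 0) := by
  -- dimension of ((Fin n → ℂ) × (Fin n → ℂ))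
  have hVdimC : Module.finrank ℂ ((Fin n → ℂ) × (Fin n → ℂ)) = 2 * n := by
    simp [Module.finrank_prod, Module.finrank_pi, two_mul]
  have hVdimR : Module.finrank ℝ ((Fin n → ℂ) × (Fin n → ℂ)) = 4 * n := by
    rw [← Module.finrank_mul_finrank ℝ ℂ ((Fin n → ℂ) × (Fin n → ℂ)), Complex.finrank_real_complex, hVdimC]
    ring
  -- the multiplication-by-I real-linear map
  set f : ((Fin n → ℂ) × (Fin n → ℂ)) →ₗ[ℝ] ((Fin n → ℂ) × (Fin n → ℂ)) :=
    (LinearMap.lsmul ℂ ((Fin n → ℂ) × (Fin n → ℂ)) Complex.I).restrictScalars ℝ with hf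
  have hf_apply : ∀ v : ((Fin n → ℂ) × (Fin n → ℂ)), f v = Complex.I • v := fun v => rfl
  have hf_inj : Function.Injective f := by
    intro x y hxy
    have : Complex.I • x = Complex.I • y := hxy
    have := congrArg (fun w => (Complex.I)⁻¹ • w) this
    simpa [smul_smul, Complex.I_ne_zero] using this
  set Sig' := Sig.map f with hSig'
  have hSig'_dim : Module.finrank ℝ Sig' = 2 * n := by
    rw [hSig', ← hdim]
    exact (Submodule.equivMapOfInjective f hf_inj Sig).finrank_eq.symm
  have hinf : Sig ⊓ Sig' = ⊥ := by
    rw [Submodule.eq_bot_iff]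
    rintro v ⟨hv1, hv2⟩
    obtain ⟨w, hw, hwv⟩ := hv2
    have hIw : Complex.I • w = v := hwv
    have : Complex.I • v ∈ Sig := by
      have : Complex.I • v = -w := by
        rw [← hIw, smul_smul, Complex.I_mul_I, neg_one_smul]
      rw [this]; exact Sig.neg_mem hw
    exact htotreal v hv1 this
  have hsup : Sig ⊔ Sig' = ⊤ := by
    apply Submodule.eq_top_of_finrank_eq
    have h := Submodule.finrank_sup_add_finrank_inf_eq Sig Sig'
    rw [hinf] at h
    simp only [finrank_bot, add_zero, hdim, hSig'_dim] at h
    omega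
  -- decomposition : every v = a + I • b with a b ∈ Sig
  have hdecomp : ∀ v : ((Fin n → ℂ) × (Fin n → ℂ)), ∃ a ∈ Sig, ∃ c ∈ Sig, v = a + Complex.I • c := by
    intro v
    have hv : v ∈ Sig ⊔ Sig' := by rw [hsup]; trivial
    obtain ⟨a, ha, w, hw, hav⟩ := Submodule.mem_sup.mp hv
    obtain ⟨c, hc, hcw⟩ := hw
    exact ⟨a, ha, c, hc, by rw [← hav, ← hcw]; rfl⟩
  -- Sig spans ((Fin n → ℂ) × (Fin n → ℂ)) over ℂ
  have hspan : Submodule.span ℂ (Sig : Set ((Fin n → ℂ) × (Fin n → ℂ))) = ⊤ := by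
    rw [eq_top_iff]
    intro v _
    obtain ⟨a, ha, c, hc, rfl⟩ := hdecomp v
    exact Submodule.add_mem _ (Submodule.subset_span ha)
      (Submodule.smul_mem _ _ (Submodule.subset_span hc))
  -- ι is an involution
  have hinv : ∀ v : ((Fin n → ℂ) × (Fin n → ℂ)), ι (ι v) = v := by
    intro v
    have hv : v ∈ Submodule.span ℂ (Sig : Set ((Fin n → ℂ) × (Fin n → ℂ))) := by rw [hspan]; trivial
    induction hv using Submodule.span_induction with
    | mem x hx => rw [hι x hx, hι x hx]
    | zero => simp
    | add x y hx hy ihx ihy => simp [ihx, ihy]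
    | smul c x hx ih => simp [ih]
  -- fixed points of ι lie in Sig
  have hfix : ∀ v : ((Fin n → ℂ) × (Fin n → ℂ)), ι v = v → v ∈ Sig := by
    intro v hv
    obtain ⟨a, ha, c, hc, rfl⟩ := hdecomp v
    have : ι (a + Complex.I • c) = a - Complex.I • c := by
      simp [hι a ha, hι c hc, Complex.conj_I, sub_eq_add_neg]
    rw [this] at hv
    have hc0 : c = 0 := by
      have h4 : -(Complex.I • c) = Complex.I • c := by
        apply add_left_cancel (a := a)
        rw [← sub_eq_add_neg, hv]
      have h2 : (2 : ℂ) • (Complex.I • c) = 0 := by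
        rw [two_smul]
        nth_rewrite 1 [← h4]
        exact neg_add_cancel _
      have h3 : Complex.I • c = 0 := by
        rcases smul_eq_zero.mp h2 with h | h
        · exact absurd h two_ne_zero
        · exact h
      rcases smul_eq_zero.mp h3 with h | h
      · exact absurd h Complex.I_ne_zero
      · exact h
    rw [hc0]; simpa using ha
  -- σ(ιX, ιY) = conj σ(X,Y)
  have hkey : ∀ X Y : ((Fin n → ℂ) × (Fin n → ℂ)), sigmaC n (ι X) (ι Y) = (starRingEnd ℂ) (sigmaC n X Y) := by
    have step1 : ∀ Y ∈ Sig, ∀ X : ((Fin n → ℂ) × (Fin n → ℂ)),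
        sigmaC n (ι X) (ι Y) = (starRingEnd ℂ) (sigmaC n X Y) := by
      intro Y hY X
      have hX : X ∈ Submodule.span ℂ (Sig : Set ((Fin n → ℂ) × (Fin n → ℂ))) := by rw [hspan]; trivial
      induction hX using Submodule.span_induction with
      | mem x hx =>
        rw [hι x hx, hι Y hY, Complex.conj_eq_iff_im.mpr (hreal x hx Y hY)]
      | zero => simp [← sigmaB_apply]
      | add x y hx hy ihx ihy =>
        simp only [← sigmaB_apply, map_add, LinearMap.add_apply] at *
        rw [ihx, ihy]
      | smul c x hx ih =>
        simp only [← sigmaB_apply, map_smulₛₗ, map_smul, LinearMap.smul_apply,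
          smul_eq_mul] at *
        rw [ih]; simp
    intro X Y
    have hY : Y ∈ Submodule.span ℂ (Sig : Set ((Fin n → ℂ) × (Fin n → ℂ))) := by rw [hspan]; trivial
    induction hY using Submodule.span_induction with
    | mem y hy => exact step1 y hy X
    | zero => simp [← sigmaB_apply]
    | add y z hy hz ihy ihz =>
      simp only [← sigmaB_apply, map_add, LinearMap.add_apply] at *
      rw [ihy, ihz]
    | smul c y hy ih =>
      simp only [← sigmaB_apply, map_smulₛₗ, map_smul, LinearMap.smul_apply,
        smul_eq_mul] at *
      rw [ih]; simp
  -- Λ equals its symplectic orthogonal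
  have horth : (sigmaB n).orthogonal Λ = Λ := by
    have hle : Λ ≤ (sigmaB n).orthogonal Λ := by
      intro x hx
      rw [LinearMap.BilinForm.mem_orthogonal_iff]
      intro y hy
      exact hΛlag y hy x hx
    have hrank : Module.finrank ℂ ((sigmaB n).orthogonal Λ) ≤ Module.finrank ℂ Λ := by
      rw [LinearMap.BilinForm.finrank_orthogonal (sigmaB_nondeg n),
        hVdimC, hΛdim]
      omega
    exact (Submodule.eq_of_le_of_finrank_le hle hrank).symm
  constructor
  · -- nondegenerate → Λ ∩ Σ = 0
    intro hnd v hvΛ hvS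
    refine hnd v hvΛ ?_
    intro μ hμ
    rw [hb]
    have : sigmaC n v (ι μ) = 0 := by
      have := hkey v μ
      rw [hι v hvS] at this
      rw [this, hΛlag v hvΛ μ hμ, map_zero]
    rw [this, mul_zero]
  · -- Λ ∩ Σ = 0 → nondegenerate
    intro hcap ρ hρΛ h0
    have h0' : ∀ μ ∈ Λ, sigmaC n ρ (ι μ) = 0 := by
      intro μ hμ
      have := h0 μ hμ
      rw [hb] at this
      rcases mul_eq_zero.mp this with h | h
      · exact absurd h (by simp [Complex.I_ne_zero])
      · exact h
    -- ιρ ∈ Λ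
    have hιρ : ι ρ ∈ Λ := by
      rw [← horth, LinearMap.BilinForm.mem_orthogonal_iff]
      intro y hy
      have : sigmaC n (ι ρ) y = 0 := by
        have := hkey ρ (ι y)
        rw [hinv y] at this
        rw [this, h0' y hy, map_zero]
      exact (sigmaB_alt n).isRefl _ _ this
    -- ρ + ιρ is fixed by ι, hence in Sig ∩ Λ = 0
    have h1 : ρ + ι ρ = 0 := by
      apply hcap _ (Λ.add_mem hρΛ hιρ)
      apply hfix
      rw [map_add, hinv]; ring
    -- (2I)•ρ is fixed by ι, hence in Sig ∩ Λ = 0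
    have h2 : (2 * Complex.I) • ρ = 0 := by
      apply hcap _ (Λ.smul_mem _ hρΛ)
      apply hfix
      have hιρ_eq : ι ρ = -ρ := by
        rw [← neg_eq_of_add_eq_zero_right h1]
      rw [map_smulₛₗ, hιρ_eq, map_mul, Complex.conj_I]
      have h2c : (starRingEnd ℂ) 2 = 2 := Complex.conj_eq_iff_im.mpr (by norm_num)
      rw [h2c]
      module
    rcases smul_eq_zero.mp h2 with h | h
    · exact absurd h (by simp [Complex.I_ne_zero])
    · exact h
end

section
/- Let Λ ⊆ ℂ^{2n} be a complex Lagrangian plane. Then (1/i)·σ(X, conj(X)) > 0 for every nonzero X ∈ Λ if and only if there exists a symmetric complex n×n matrix M whose entrywise imaginary part Im M is positive definite such that Λ = {(x, Mx) : x ∈ ℂⁿ}. -/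
open Matrix

lemma sigma_conj (n : ℕ) (x ξ : Fin n → ℂ) :
    1 / Complex.I * sigmaC n (x, ξ)
        ((fun j => starRingEnd ℂ (x j)), fun j => starRingEnd ℂ (ξ j))
      = (((∑ j, ξ j * starRingEnd ℂ (x j)).im * 2 : ℝ) : ℂ) := by
  have h2 : ∑ j, (starRingEnd ℂ (ξ j)) * x j
      = starRingEnd ℂ (∑ j, ξ j * starRingEnd ℂ (x j)) := by
    rw [map_sum]
    exact Finset.sum_congr rfl fun j _ => by simp [mul_comm]
  simp only [sigmaC, h2]
  rw [Complex.sub_conj, one_div, Complex.inv_I]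
  set a : ℝ := (∑ j, ξ j * starRingEnd ℂ (x j)).im
  push_cast
  linear_combination (-2 * (a:ℂ)) * Complex.I_sq

lemma im_sum_eq (n : ℕ) (M : Matrix (Fin n) (Fin n) ℂ) (hM : Mᵀ = M) (x : Fin n → ℂ) :
    (∑ j, (M *ᵥ x) j * starRingEnd ℂ (x j)).im
      = (fun j => (x j).re) ⬝ᵥ ((Matrix.of fun j k => (M j k).im) *ᵥ fun j => (x j).re)
        + (fun j => (x j).im) ⬝ᵥ ((Matrix.of fun j k => (M j k).im) *ᵥ fun j => (x j).im) := by
  have hMs : ∀ j k, M k j = M j k := fun j k => by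
    simpa using congrFun (congrFun hM j) k
  have hanti : ∑ j, ∑ k, (M j k).re * ((x k).im * (x j).re - (x k).re * (x j).im) = 0 := by
    set F : Fin n → Fin n → ℝ :=
      fun j k => (M j k).re * ((x k).im * (x j).re - (x k).re * (x j).im) with hF
    have hsk : ∀ j k, F k j = -F j k := by
      intro j k
      simp only [hF, hMs k j]
      ring
    have h : (∑ j, ∑ k, F j k) = - ∑ j, ∑ k, F j k := by
      calc (∑ j, ∑ k, F j k) = ∑ k, ∑ j, F j k := Finset.sum_comm
        _ = ∑ k, ∑ j, -F k j := Finset.sum_congr rfl fun k _ =>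
              Finset.sum_congr rfl fun j _ => hsk k j
        _ = - ∑ j, ∑ k, F j k := by
              rw [← Finset.sum_neg_distrib]
              exact Finset.sum_congr rfl fun k _ => by rw [← Finset.sum_neg_distrib]
    linarith
  have lhs_eq : (∑ j, (M *ᵥ x) j * starRingEnd ℂ (x j)).im
      = ∑ j, ∑ k, ((M j k).re * ((x k).im * (x j).re - (x k).re * (x j).im)
        + (M j k).im * ((x k).re * (x j).re + (x k).im * (x j).im)) := by
    rw [Complex.im_sum]
    refine Finset.sum_congr rfl fun j _ => ?_
    simp only [Matrix.mulVec, dotProduct, Finset.sum_mul, Complex.im_sum]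
    refine Finset.sum_congr rfl fun k _ => ?_
    simp [Complex.mul_im, Complex.mul_re]
    ring
  rw [lhs_eq]
  simp only [dotProduct, Matrix.mulVec, Matrix.of_apply, Finset.mul_sum]
  rw [← Finset.sum_add_distrib]
  rw [show (∑ j, ∑ k, ((M j k).re * ((x k).im * (x j).re - (x k).re * (x j).im)
        + (M j k).im * ((x k).re * (x j).re + (x k).im * (x j).im)))
      = (∑ j, ∑ k, (M j k).re * ((x k).im * (x j).re - (x k).re * (x j).im))
        + ∑ j, ∑ k, (M j k).im * ((x k).re * (x j).re + (x k).im * (x j).im) by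
    rw [← Finset.sum_add_distrib]
    exact Finset.sum_congr rfl fun j _ => by rw [← Finset.sum_add_distrib]]
  rw [hanti, zero_add]
  refine Finset.sum_congr rfl fun j _ => ?_
  rw [← Finset.sum_add_distrib]
  exact Finset.sum_congr rfl fun k _ => by ring

open ComplexOrder in
/-- a complex Lagrangian plane `Λ` satisfies `(1/i)σ(X, conj X) > 0`
for all nonzero `X ∈ Λ` iff `Λ = {(x, Mx)}` for a symmetric complex matrix `M` whose
imaginary part is positive definite. -/
theorem stmt_12 (n : ℕ) (Λ : Submodule ℂ ((Fin n → ℂ) × (Fin n → ℂ)))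
    (hΛdim : Module.finrank ℂ Λ = n)
    (hΛlag : ∀ X ∈ Λ, ∀ Y ∈ Λ, sigmaC n X Y = 0) :
    (∀ X ∈ Λ, X ≠ 0 →
        0 < 1 / Complex.I * sigmaC n X
          ((fun j => starRingEnd ℂ (X.1 j)), fun j => starRingEnd ℂ (X.2 j))) ↔
      ∃ M : Matrix (Fin n) (Fin n) ℂ, Mᵀ = M ∧
        (Matrix.of fun j k => (M j k).im).PosDef ∧
        (Λ : Set ((Fin n → ℂ) × (Fin n → ℂ))) = {p | p.2 = M *ᵥ p.1} := by
  constructor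
  · intro hpos
    classical
    set f : Λ →ₗ[ℂ] (Fin n → ℂ) := (LinearMap.fst ℂ _ _).comp Λ.subtype with hfdef
    have hinj : Function.Injective f := by
      rw [← LinearMap.ker_eq_bot, LinearMap.ker_eq_bot']
      intro X hX0
      by_contra hne
      have h := hpos (X : (Fin n → ℂ) × (Fin n → ℂ)) X.2
        (fun h => hne (Subtype.ext h))
      have hx1 : (X : (Fin n → ℂ) × (Fin n → ℂ)).1 = 0 := hX0
      rw [show sigmaC n (X : (Fin n → ℂ) × (Fin n → ℂ))
          ((fun j => starRingEnd ℂ ((X : (Fin n → ℂ) × (Fin n → ℂ)).1 j)),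
            fun j => starRingEnd ℂ ((X : (Fin n → ℂ) × (Fin n → ℂ)).2 j)) = 0 by
        simp [sigmaC, hx1]] at h
      simp at h
    have hsurj : Function.Surjective f :=
      (LinearMap.injective_iff_surjective_of_finrank_eq_finrank
        (by rw [hΛdim, Module.finrank_fin_fun])).mp hinj
    let e : Λ ≃ₗ[ℂ] (Fin n → ℂ) := LinearEquiv.ofBijective f ⟨hinj, hsurj⟩
    let g : (Fin n → ℂ) →ₗ[ℂ] (Fin n → ℂ) :=
      ((LinearMap.snd ℂ _ _).comp Λ.subtype).comp (e.symm : (Fin n → ℂ) →ₗ[ℂ] Λ)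
    set M := LinearMap.toMatrix' g with hMdef
    have hMg : ∀ x, M *ᵥ x = g x := fun x => by
      rw [← Matrix.toLin'_apply, hMdef, Matrix.toLin'_toMatrix']
    have hmem : ∀ x : Fin n → ℂ, (x, M *ᵥ x) ∈ Λ := by
      intro x
      rw [hMg]
      have h1 : ((e.symm x : Λ) : (Fin n → ℂ) × (Fin n → ℂ)).1 = x := by
        have := e.apply_symm_apply x
        exact this
      have h2 : g x = ((e.symm x : Λ) : (Fin n → ℂ) × (Fin n → ℂ)).2 := rfl
      rw [h2]
      have h3 : (x, ((e.symm x : Λ) : (Fin n → ℂ) × (Fin n → ℂ)).2)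
          = ((e.symm x : Λ) : (Fin n → ℂ) × (Fin n → ℂ)) := Prod.ext h1.symm rfl
      rw [h3]
      exact (e.symm x : Λ).2
    have hgraph : (Λ : Set ((Fin n → ℂ) × (Fin n → ℂ))) = {p | p.2 = M *ᵥ p.1} := by
      ext p
      constructor
      · intro hp
        have h1 : e ⟨p, hp⟩ = p.1 := rfl
        have h2 : e.symm p.1 = ⟨p, hp⟩ := by rw [← h1, e.symm_apply_apply]
        show p.2 = M *ᵥ p.1
        rw [hMg, show g p.1 = ((e.symm p.1 : Λ) : (Fin n → ℂ) × (Fin n → ℂ)).2 from rfl, h2]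
      · intro hp
        have h : p = (p.1, M *ᵥ p.1) := Prod.ext rfl hp
        rw [h]
        exact hmem p.1
    have hMT : Mᵀ = M := by
      ext j k
      have h1 := hΛlag _ (hmem (Pi.single k 1)) _ (hmem (Pi.single j 1))
      simp only [sigmaC] at h1
      have e1 : ∑ i, (M *ᵥ Pi.single k 1) i * (Pi.single j 1 : Fin n → ℂ) i
          = (M *ᵥ Pi.single k 1) j := by
        simp [Pi.single_apply]
      have e2 : ∑ i, (M *ᵥ Pi.single j 1) i * (Pi.single k 1 : Fin n → ℂ) i
          = (M *ᵥ Pi.single j 1) k := by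
        simp [Pi.single_apply]
      rw [e1, e2, sub_eq_zero] at h1
      have e3 : (M *ᵥ Pi.single k 1) j = M j k := by
        simp [Matrix.mulVec, dotProduct, Pi.single_apply]
      have e4 : (M *ᵥ Pi.single j 1) k = M k j := by
        simp [Matrix.mulVec, dotProduct, Pi.single_apply]
      rw [e3, e4] at h1
      simpa using h1.symm
    have hpd : (Matrix.of fun j k => (M j k).im).PosDef := by
      rw [Matrix.posDef_iff_dotProduct_mulVec]
      constructor
      · show (Matrix.of fun j k => (M j k).im)ᴴ = _
        ext j k
        have := congrFun (congrFun hMT j) k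
        simp only [Matrix.conjTranspose_apply, Matrix.of_apply, star_trivial]
        simpa using (congrArg Complex.im (congrFun (congrFun hMT k) j)).symm
      · intro u hu
        set x : Fin n → ℂ := fun j => ((u j : ℝ) : ℂ) with hxdef
        have hx0 : x ≠ 0 := by
          intro h
          apply hu
          funext j
          have := congrFun h j
          simpa [hxdef] using this
        have hXne : ((x, M *ᵥ x) : (Fin n → ℂ) × (Fin n → ℂ)) ≠ 0 := by
          intro h
          exact hx0 (congrArg Prod.fst h)
        have hppos := hpos _ (hmem x) hXne
        rw [sigma_conj n x (M *ᵥ x)] at hppos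
        rw [Complex.zero_lt_real, im_sum_eq n M hMT x] at hppos
        have hre : (fun j => (x j).re) = u := by funext j; simp [hxdef]
        have him : (fun j => (x j).im) = 0 := by funext j; simp [hxdef]
        rw [hre, him] at hppos
        simp only [Matrix.mulVec_zero, dotProduct_zero, add_zero] at hppos
        simpa using by linarith
    exact ⟨M, hMT, hpd, hgraph⟩
  · rintro ⟨M, hMT, hpd, hgraph⟩ X hX hX0
    obtain ⟨x, ξ⟩ := X
    have hx2 : ξ = M *ᵥ x := by
      have : ((x, ξ) : (Fin n → ℂ) × (Fin n → ℂ)) ∈ {p : (Fin n → ℂ) × (Fin n → ℂ) | p.2 = M *ᵥ p.1} := by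
        rw [← hgraph]; exact hX
      exact this
    have hx0 : x ≠ 0 := by
      intro h
      apply hX0
      rw [hx2, h, Matrix.mulVec_zero]
      rfl
    rw [sigma_conj n x ξ, Complex.zero_lt_real, hx2, im_sum_eq n M hMT x]
    set B := Matrix.of fun j k => (M j k).im
    set u : Fin n → ℝ := fun j => (x j).re
    set v : Fin n → ℝ := fun j => (x j).im
    have h1 : 0 ≤ u ⬝ᵥ B *ᵥ u := by simpa using (Matrix.posSemidef_iff_dotProduct_mulVec.mp hpd.posSemidef).2 u
    have h2 : 0 ≤ v ⬝ᵥ B *ᵥ v := by simpa using (Matrix.posSemidef_iff_dotProduct_mulVec.mp hpd.posSemidef).2 v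
    have huv : u ≠ 0 ∨ v ≠ 0 := by
      by_contra h
      push_neg at h
      apply hx0
      funext j
      have hu := congrFun h.1 j
      have hv := congrFun h.2 j
      exact Complex.ext (by simpa using hu) (by simpa using hv)
    rcases huv with h | h
    · have := (Matrix.posDef_iff_dotProduct_mulVec.mp hpd).2 h
      simp only [star_trivial] at this
      linarith
    · have := (Matrix.posDef_iff_dotProduct_mulVec.mp hpd).2 h
      simp only [star_trivial] at this
      linarith
end

section
/- Let S be a symmetric complex n×n matrix and H a Hermitian n×n matrix, and set Λ_Φ = {(x, (2/i)(Sx + conj(Hx))) : x ∈ ℂⁿ} ⊂ ℂ^{2n}, a real-linear subspace of real dimension 2n. Then: (i) σ takes real values on Λ_Φ × Λ_Φ (i.e. Λ_Φ is I-Lagrangian: Im σ vanishes on Λ_Φ); (ii) Λ_Φ ∩ iΛ_Φ = {0} if and only if H is invertible; and (iii) the restriction of σ to Λ_Φ is nondegenerate if and only if H is invertible. -/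
open Matrix

/-- for `Λ_Φ = {(x, (2/i)(Sx + conj(Hx)))}` with `S` symmetric and `H`
Hermitian: (i) `σ` is real-valued on `Λ_Φ × Λ_Φ`; (ii) `Λ_Φ ∩ iΛ_Φ = {0}` iff `H` is
invertible; (iii) the restriction of `σ` to `Λ_Φ` is nondegenerate iff `H` is
invertible. -/
theorem stmt_13 (n : ℕ) (S H : Matrix (Fin n) (Fin n) ℂ)
    (hS : Sᵀ = S) (hH : H.IsHermitian)
    (L : Set ((Fin n → ℂ) × (Fin n → ℂ)))
    (hL : L = {p | p.2 =
      (2 / Complex.I) • (S *ᵥ p.1 + fun j => starRingEnd ℂ ((H *ᵥ p.1) j))}) :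
    (∀ P ∈ L, ∀ Q ∈ L, (sigmaC n P Q).im = 0) ∧
    ((∀ p ∈ L, Complex.I • p ∈ L → p = 0) ↔ IsUnit H) ∧
    ((∀ p ∈ L, (∀ q ∈ L, sigmaC n p q = 0) → p = 0) ↔ IsUnit H) := by
  set c : ℂ := 2 / Complex.I with hcdef
  have hc : c = -(2 * Complex.I) := Complex.div_I 2
  set ξ : (Fin n → ℂ) → (Fin n → ℂ) :=
    fun x => (2 / Complex.I) • (S *ᵥ x + fun j => starRingEnd ℂ ((H *ᵥ x) j)) with hξ
  -- membership
  have hmem : ∀ p : (Fin n → ℂ) × (Fin n → ℂ), p ∈ L ↔ p.2 = ξ p.1 := by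
    intro p; rw [hL]; rfl
  have hmemx : ∀ x : Fin n → ℂ, (x, ξ x) ∈ L := fun x => (hmem _).mpr rfl
  -- symmetry of S
  have hS' : ∀ j k, S j k = S k j := by
    intro j k
    have := congrFun (congrFun hS k) j
    simpa [Matrix.transpose_apply] using this
  have hH' : ∀ j k, starRingEnd ℂ (H j k) = H k j := fun j k => hH.apply k j
  have hSsym : ∀ x y : Fin n → ℂ, ∑ j, (S *ᵥ x) j * y j = ∑ j, (S *ᵥ y) j * x j := by
    intro x y
    simp only [Matrix.mulVec, dotProduct, Finset.sum_mul]
    rw [Finset.sum_comm]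
    exact Finset.sum_congr rfl fun j _ => Finset.sum_congr rfl fun k _ => by
      rw [hS' j k]; ring
  -- the Hermitian pairing
  set A : (Fin n → ℂ) → (Fin n → ℂ) → ℂ :=
    fun x y => ∑ j, starRingEnd ℂ ((H *ᵥ x) j) * y j with hA
  have hHconj : ∀ x y : Fin n → ℂ, A y x = starRingEnd ℂ (A x y) := by
    intro x y
    simp only [hA, map_sum, _root_.map_mul, Complex.conj_conj]
    simp only [Matrix.mulVec, dotProduct, map_sum, _root_.map_mul, Finset.sum_mul]
    rw [Finset.sum_comm]
    refine Finset.sum_congr rfl fun j _ => Finset.sum_congr rfl fun k _ => ?_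
    rw [hH' k j]
    ring
  -- key formula
  have key : ∀ x y : Fin n → ℂ,
      sigmaC n (x, ξ x) (y, ξ y) = ((4 * (A x y).im : ℝ) : ℂ) := by
    intro x y
    have expand : ∀ u w : Fin n → ℂ,
        ∑ j, (ξ u) j * w j = c * ((∑ j, (S *ᵥ u) j * w j) + A u w) := by
      intro u w
      simp only [hξ, Pi.smul_apply, Pi.add_apply, smul_eq_mul, hA, ← hcdef]
      rw [mul_add, Finset.mul_sum, Finset.mul_sum, ← Finset.sum_add_distrib]
      exact Finset.sum_congr rfl fun j _ => by ring
    show (∑ j, (ξ x) j * y j) - (∑ j, (ξ y) j * x j) = _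
    rw [expand, expand, hSsym x y, hHconj x y]
    have : c * ((∑ j, (S *ᵥ y) j * x j) + A x y)
        - c * ((∑ j, (S *ᵥ y) j * x j) + starRingEnd ℂ (A x y))
        = c * (A x y - starRingEnd ℂ (A x y)) := by ring
    rw [this, Complex.sub_conj, hc]
    push_cast
    linear_combination (-4 * ((A x y).im : ℂ)) * Complex.I_sq
  -- injectivity iff unit
  have hinj : (∀ v : Fin n → ℂ, H *ᵥ v = 0 → v = 0) ↔ IsUnit H := by
    rw [Matrix.isUnit_iff_isUnit_det, isUnit_iff_ne_zero]
    constructor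
    · intro h hdet
      obtain ⟨v, hv0, hv⟩ := Matrix.exists_mulVec_eq_zero_iff.mpr hdet
      exact hv0 (h v hv)
    · intro h v hv
      by_contra hv0
      exact h (Matrix.exists_mulVec_eq_zero_iff.mp ⟨v, hv0, hv⟩)
  -- a point of L with x = 0 is 0
  have hxzero : ∀ p : (Fin n → ℂ) × (Fin n → ℂ), p ∈ L → p.1 = 0 → p = 0 := by
    intro p hp h1
    have h2 := (hmem p).mp hp
    have : ξ p.1 = 0 := by
      rw [h1]
      funext j
      simp [hξ, Matrix.mulVec_zero]
    exact Prod.ext h1 (by rw [h2, this]; rfl)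
  refine ⟨?_, ?_, ?_⟩
  · -- (i)
    intro P hP Q hQ
    have hP2 := (hmem P).mp hP
    have hQ2 := (hmem Q).mp hQ
    have : sigmaC n P Q = sigmaC n (P.1, ξ P.1) (Q.1, ξ Q.1) := by
      rw [← hP2, ← hQ2]
    rw [this, key]
    exact Complex.ofReal_im _
  · -- (ii)
    constructor
    · intro hcond
      refine hinj.mp fun v hv => ?_
      have h2 : Complex.I • (v, ξ v) ∈ L := by
        rw [hL]
        show Complex.I • ξ v = (2 / Complex.I) • (S *ᵥ (Complex.I • v)
          + fun j => starRingEnd ℂ ((H *ᵥ (Complex.I • v)) j))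
        funext j
        simp only [hξ, Pi.smul_apply, Pi.add_apply, smul_eq_mul, Matrix.mulVec_smul, hv,
          smul_zero, Pi.zero_apply, map_zero, mul_zero, add_zero]
        ring
      have := hcond (v, ξ v) (hmemx v) h2
      exact congrArg Prod.fst this
    · intro hU p hp hip
      refine hxzero p hp (hinj.mpr hU p.1 ?_)
      have h1 := (hmem p).mp hp
      have h2 := (hmem _).mp hip
      funext j
      have h3 := congrFun h2 j
      simp only [Prod.smul_fst, Prod.smul_snd, hξ, h1, Pi.smul_apply, Pi.add_apply,
        smul_eq_mul, Matrix.mulVec_smul, _root_.map_mul, Complex.conj_I, ← hcdef, hc] at h3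
      simp only [Pi.zero_apply]
      have h4 : starRingEnd ℂ ((H *ᵥ p.1) j) = 0 := by
        linear_combination h3 / 4 + (starRingEnd ℂ ((H *ᵥ p.1) j)) * Complex.I_sq
      simpa using congrArg (starRingEnd ℂ) h4
  · -- (iii)
    constructor
    · intro hcond
      refine hinj.mp fun v hv => ?_
      have hall : ∀ q ∈ L, sigmaC n (v, ξ v) q = 0 := by
        intro q hq
        have hq2 := (hmem q).mp hq
        have : sigmaC n (v, ξ v) q = sigmaC n (v, ξ v) (q.1, ξ q.1) := by rw [← hq2]
        rw [this, key]
        have : A v q.1 = 0 := by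
          simp [hA, hv]
        rw [this]
        simp
      have := hcond (v, ξ v) (hmemx v) hall
      exact congrArg Prod.fst this
    · intro hU p hp hall
      refine hxzero p hp (hinj.mpr hU p.1 ?_)
      set y : Fin n → ℂ := fun j => Complex.I * (H *ᵥ p.1) j with hy
      have h1 := (hmem p).mp hp
      have h2 := hall (y, ξ y) (hmemx y)
      have h3 : sigmaC n p (y, ξ y) = ((4 * (A p.1 y).im : ℝ) : ℂ) := by
        have : sigmaC n p (y, ξ y) = sigmaC n (p.1, ξ p.1) (y, ξ y) := by rw [← h1]
        rw [this, key]
      rw [h3] at h2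
      have h4 : (A p.1 y).im = 0 := by
        have := Complex.ofReal_eq_zero.mp h2
        linarith
      have h5 : (A p.1 y).im = ∑ j, Complex.normSq ((H *ᵥ p.1) j) := by
        rw [hA]
        simp only [Complex.im_sum]
        refine Finset.sum_congr rfl fun j _ => ?_
        simp only [hy, Complex.mul_im, Complex.mul_re, Complex.normSq_apply,
          Complex.I_re, Complex.I_im, Complex.conj_re, Complex.conj_im]
        ring
      rw [h5] at h4
      have h6 := (Finset.sum_eq_zero_iff_of_nonneg
        (fun j _ => Complex.normSq_nonneg _)).mp h4
      funext j
      exact Complex.normSq_eq_zero.mp (h6 j (Finset.mem_univ j))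
end

section
/- Let S be a symmetric complex n×n matrix and H a positive definite Hermitian n×n matrix, let Λ_Φ = {(x, (2/i)(Sx + conj(Hx))) : x ∈ ℂⁿ} ⊂ ℂ^{2n}, let Φ(x) = Re((Sx)·x) + Σ_{j,k} H_{jk} x_k conj(x_j), and let ι be the unique conjugate-linear map on ℂ^{2n} restricting to the identity on Λ_Φ. A complex Lagrangian plane Λ ⊆ ℂ^{2n} is Λ_Φ-positive, i.e. (1/i)σ(ρ, ι(ρ)) > 0 for all nonzero ρ ∈ Λ, if and only if there exists a symmetric complex n×n matrix S̃ such that Λ = {(x, (2/i)S̃x) : x ∈ ℂⁿ} and the real quadratic form x ↦ Φ(x) − Re((S̃x)·x) is positive definite on ℂⁿ. -/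
open Matrix

lemma crux_hard {E : Type*} [NormedAddCommGroup E] [InnerProductSpace ℂ E]
    (T : E → E) (hadd : ∀ u v, T (u + v) = T u + T v)
    (hsmul : ∀ (c : ℂ) (u : E), T (c • u) = (starRingEnd ℂ c) • T u)
    (hsym : ∀ u v, (inner ℂ u (T v) : ℂ) = inner ℂ v (T u))
    (hB : ∀ u : E, u ≠ 0 → (inner ℂ u (T u) : ℂ).re < (inner ℂ u u : ℂ).re) :
    (∀ u : E, u ≠ 0 → (inner ℂ (T u) (T u) : ℂ).re < (inner ℂ u u : ℂ).re) := by
  have hself : ∀ w : E, (inner ℂ w w : ℂ).re = ‖w‖ ^ 2 := fun w => by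
    have := inner_self_eq_norm_sq (𝕜 := ℂ) w
    simpa using this

  have hself : ∀ w : E, (inner ℂ w w : ℂ).re = ‖w‖ ^ 2 := fun w => by
    have := inner_self_eq_norm_sq (𝕜 := ℂ) w
    simpa using this
  have hB' : ∀ u : E, u ≠ 0 → (inner ℂ u (T u) : ℂ).re < ‖u‖ ^ 2 := by
    intro u hu; have := hB u hu; rwa [hself] at this
  have hstrict : ∀ u : E, u ≠ 0 → ‖(inner ℂ u (T u) : ℂ)‖ < ‖u‖ ^ 2 := by
    intro u hu
    set c : ℂ := inner ℂ u (T u) with hc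
    rcases eq_or_ne c 0 with h0 | h0
    · rw [h0]; simpa using pow_pos (norm_pos_iff.mpr hu) 2
    · set ζ : ℂ := Complex.exp ((c.arg / 2 : ℝ) * Complex.I) with hζ
      have hζ2 : ζ ^ 2 = Complex.exp ((c.arg : ℝ) * Complex.I) := by
        rw [hζ, ← Complex.exp_nat_mul]
        congr 1
        push_cast
        ring
      have hζnorm : ‖ζ‖ = 1 := by
        rw [hζ]
        exact Complex.norm_exp_ofReal_mul_I _
      have hζne : ζ ≠ 0 := by
        intro h; rw [h] at hζnorm; simp at hζnorm
      have hkey : (inner ℂ (ζ • u) (T (ζ • u)) : ℂ) = (‖c‖ : ℂ) := by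
        rw [hsmul, inner_smul_left, inner_smul_right, ← hc]
        have h1 : (starRingEnd ℂ) ζ * ((starRingEnd ℂ) ζ * c) = (starRingEnd ℂ) (ζ ^ 2) * c := by
          rw [map_pow]; ring
        rw [h1, hζ2, ← Complex.exp_conj]
        have h2 : (starRingEnd ℂ) ((c.arg : ℝ) * Complex.I) = -((c.arg : ℝ) * Complex.I) := by
          simp [Complex.conj_ofReal]
        have h3 : c = (‖c‖ : ℂ) * Complex.exp ((c.arg : ℝ) * Complex.I) :=
          (Complex.norm_mul_exp_arg_mul_I c).symm
        rw [h2, Complex.exp_neg]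
        rw [inv_mul_eq_iff_eq_mul₀ (Complex.exp_ne_zero _)]
        exact h3.trans (mul_comm _ _)
      have := hB' (ζ • u) (smul_ne_zero hζne hu)
      rw [hkey, Complex.ofReal_re, norm_smul, hζnorm, one_mul] at this
      exact this
  have hb : ∀ w : E, ‖(inner ℂ w (T w) : ℂ)‖ ≤ ‖w‖ ^ 2 := by
    intro w
    rcases eq_or_ne w 0 with rfl | hw
    · simp
    · exact (hstrict w hw).le
  intro u hu
  rw [hself, hself]
  by_cases hTu : T u = 0
  · rw [hTu]; simpa using pow_pos (norm_pos_iff.mpr hu) 2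
  · have ha : 0 < ‖u‖ := norm_pos_iff.mpr hu
    have hbpos : 0 < ‖T u‖ := norm_pos_iff.mpr hTu
    set v : E := ((‖u‖ / ‖T u‖ : ℝ) : ℂ) • T u with hv
    have hvnorm : ‖v‖ = ‖u‖ := by
      rw [hv, norm_smul]
      simp only [Complex.norm_real, Real.norm_eq_abs, abs_of_pos (div_pos ha hbpos)]
      field_simp
    have hTusq : (inner ℂ (T u) (T u) : ℂ) = ((‖T u‖ : ℂ)) ^ 2 := by
      rw [inner_self_eq_norm_sq_to_K]; norm_cast
    have hvTu : (inner ℂ v (T u) : ℂ) = ((‖u‖ * ‖T u‖ : ℝ) : ℂ) := by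
      rw [hv, inner_smul_left, hTusq, Complex.conj_ofReal]
      have hTne : ((‖T u‖ : ℝ) : ℂ) ≠ 0 := by exact_mod_cast hbpos.ne'
      push_cast
      field_simp [hTne]
    have hTneg : T (-v) = - T v := by
      have h := hsmul (-1) v
      simpa using h
    have hpolar : (inner ℂ (u + v) (T (u + v)) : ℂ) - inner ℂ (u - v) (T (u - v))
        = 4 * inner ℂ v (T u) := by
      simp only [sub_eq_add_neg, hadd, hTneg, inner_add_left, inner_add_right,
        inner_neg_left, inner_neg_right]
      rw [hsym u v]
      ring
    have h4 : ((inner ℂ (u + v) (T (u + v)) : ℂ) - inner ℂ (u - v) (T (u - v))).re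
        = 4 * (‖u‖ * ‖T u‖) := by
      rw [hpolar, hvTu]
      have : (4 : ℂ) * ((‖u‖ * ‖T u‖ : ℝ) : ℂ) = ((4 * (‖u‖ * ‖T u‖) : ℝ) : ℂ) := by
        push_cast; ring
      rw [this, Complex.ofReal_re]
    have h5 : ((inner ℂ (u + v) (T (u + v)) : ℂ) - inner ℂ (u - v) (T (u - v))).re
        ≤ ‖(inner ℂ (u + v) (T (u + v)) : ℂ)‖ + ‖(inner ℂ (u - v) (T (u - v)) : ℂ)‖ :=
      (Complex.re_le_norm _).trans (norm_sub_le _ _)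
    have h6 : ‖(inner ℂ (u + v) (T (u + v)) : ℂ)‖ + ‖(inner ℂ (u - v) (T (u - v)) : ℂ)‖
        < ‖u + v‖ ^ 2 + ‖u - v‖ ^ 2 := by
      rcases eq_or_ne (u + v) 0 with h | h
      · have h' : u - v ≠ 0 := by
          intro h''
          apply hu
          have h3 : u + u = 0 := by
            rw [show u + u = (u + v) + (u - v) by abel, h, h'', add_zero]
          have h4 : (2 : ℂ) • u = 0 := by rw [two_smul]; exact h3
          simpa using h4
        exact add_lt_add_of_le_of_lt (hb _) (hstrict _ h')
      · exact add_lt_add_of_lt_of_le (hstrict _ h) (hb _)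
    have h7 : ‖u + v‖ ^ 2 + ‖u - v‖ ^ 2 = 4 * ‖u‖ ^ 2 := by
      have hpl := parallelogram_law_with_norm ℂ u v
      rw [hvnorm] at hpl
      nlinarith [hpl]
    have hfin : ‖T u‖ < ‖u‖ := by nlinarith
    nlinarith



lemma crux_aux {E : Type*} [NormedAddCommGroup E] [InnerProductSpace ℂ E]
    (T : E → E) (hadd : ∀ u v, T (u + v) = T u + T v)
    (hsmul : ∀ (c : ℂ) (u : E), T (c • u) = (starRingEnd ℂ c) • T u)
    (hsym : ∀ u v, (inner ℂ u (T v) : ℂ) = inner ℂ v (T u)) :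
    (∀ u : E, u ≠ 0 → (inner ℂ (T u) (T u) : ℂ).re < (inner ℂ u u : ℂ).re) ↔
      (∀ u : E, u ≠ 0 → (inner ℂ u (T u) : ℂ).re < (inner ℂ u u : ℂ).re) := by
  have hself : ∀ w : E, (inner ℂ w w : ℂ).re = ‖w‖ ^ 2 := fun w => by
    have := inner_self_eq_norm_sq (𝕜 := ℂ) w
    simpa using this
  constructor
  · intro hA u hu
    have hTu : ‖T u‖ < ‖u‖ := by
      have h2 := hA u hu
      rw [hself, hself] at h2
      exact lt_of_pow_lt_pow_left₀ 2 (norm_nonneg u) h2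
    calc (inner ℂ u (T u) : ℂ).re ≤ ‖(inner ℂ u (T u) : ℂ)‖ := Complex.re_le_norm _
      _ ≤ ‖u‖ * ‖T u‖ := norm_inner_le_norm u (T u)
      _ < ‖u‖ * ‖u‖ := by
          exact mul_lt_mul_of_pos_left hTu (norm_pos_iff.mpr hu)
      _ = (inner ℂ u u : ℂ).re := by rw [hself]; ring
  · exact crux_hard T hadd hsmul hsym

open ComplexOrder in
lemma aux2 {n : ℕ} (H B : Matrix (Fin n) (Fin n) ℂ) (hH : H.PosDef) (hB : Bᵀ = B) :
    (∀ x : Fin n → ℂ, x ≠ 0 →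
        (star (H⁻¹ *ᵥ star (B *ᵥ x)) ⬝ᵥ (H *ᵥ (H⁻¹ *ᵥ star (B *ᵥ x)))).re
          < (star x ⬝ᵥ (H *ᵥ x)).re)
      ↔ (∀ x : Fin n → ℂ, x ≠ 0 → ((B *ᵥ x) ⬝ᵥ x).re < (star x ⬝ᵥ (H *ᵥ x)).re) := by
  have hdet : IsUnit H.det := (Matrix.isUnit_iff_isUnit_det H).mp hH.isUnit
  have hHinv : ∀ v : Fin n → ℂ, H *ᵥ (H⁻¹ *ᵥ v) = v := fun v => by
    rw [Matrix.mulVec_mulVec, Matrix.mul_nonsing_inv _ hdet, Matrix.one_mulVec]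
  letI instN : NormedAddCommGroup (Fin n → ℂ) := Matrix.toNormedAddCommGroup H hH
  letI instI := Matrix.toInnerProductSpace H hH.posSemidef
  set T : (Fin n → ℂ) → (Fin n → ℂ) := fun x => H⁻¹ *ᵥ star (B *ᵥ x) with hT
  have hinner : ∀ u v : Fin n → ℂ, (inner ℂ u v : ℂ) = star u ⬝ᵥ (H *ᵥ v) := fun u v => dotProduct_comm _ _
  have hdotsym : ∀ a b : Fin n → ℂ, (B *ᵥ a) ⬝ᵥ b = (B *ᵥ b) ⬝ᵥ a := by
    intro a b
    rw [dotProduct_comm, Matrix.dotProduct_mulVec]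
    conv_lhs => rw [← hB, Matrix.vecMul_transpose]
  have hadd : ∀ u v, T (u + v) = T u + T v := by
    intro u v
    simp only [hT, Matrix.mulVec_add, star_add]
  have hsmul : ∀ (c : ℂ) (u : Fin n → ℂ), T (c • u) = (starRingEnd ℂ c) • T u := by
    intro c u
    simp only [hT, Matrix.mulVec_smul, star_smul, starRingEnd_apply]
  have hsym : ∀ u v : Fin n → ℂ, (inner ℂ u (T v) : ℂ) = inner ℂ v (T u) := by
    intro u v
    rw [hinner, hinner, hT]
    simp only
    rw [hHinv, hHinv, star_dotProduct_star, star_dotProduct_star]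
    rw [hdotsym]
  have key := crux_aux T hadd hsmul hsym
  have key2 : (∀ u : Fin n → ℂ, u ≠ 0 → (inner ℂ u (T u) : ℂ).re < (inner ℂ u u : ℂ).re)
      ↔ (∀ x : Fin n → ℂ, x ≠ 0 → ((B *ᵥ x) ⬝ᵥ x).re < (star x ⬝ᵥ (H *ᵥ x)).re) := by
    apply forall_congr'
    intro u
    apply imp_congr_right
    intro _
    have h3 : (inner ℂ u (T u) : ℂ) = star ((B *ᵥ u) ⬝ᵥ u) := by
      rw [hinner, hT]
      simp only
      rw [hHinv, star_dotProduct_star]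
    rw [h3, hinner]
    have h4 : (star ((B *ᵥ u) ⬝ᵥ u) : ℂ).re = ((B *ᵥ u) ⬝ᵥ u).re := Complex.conj_re _
    rw [h4]
  refine Iff.trans ?_ (key.trans key2)
  simp only [hinner, hT]



open ComplexOrder in
/-- with `S` symmetric, `H` positive definite Hermitian,
`Φ(x) = Re((Sx)·x) + ∑ H_{jk} x_k conj(x_j)`, `Λ_Φ` its graph Lagrangian and `ι` the
conjugate-linear map fixing `Λ_Φ`, a complex Lagrangian plane `Λ` is `Λ_Φ`-positive iff
`Λ = {(x, (2/i)S̃x)}` for a symmetric `S̃` with `Φ(x) − Re((S̃x)·x)` positive definite. -/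
theorem stmt_15 (n : ℕ) (S H : Matrix (Fin n) (Fin n) ℂ)
    (hS : Sᵀ = S) (hH : H.PosDef)
    (Φ : (Fin n → ℂ) → ℝ)
    (hΦ : ∀ x, Φ x = ((S *ᵥ x) ⬝ᵥ x).re +
      (∑ j, ∑ k, H j k * x k * starRingEnd ℂ (x j)).re)
    (L : Set ((Fin n → ℂ) × (Fin n → ℂ)))
    (hL : L = {p | p.2 =
      (2 / Complex.I) • (S *ᵥ p.1 + fun j => starRingEnd ℂ ((H *ᵥ p.1) j))})
    (ι : ((Fin n → ℂ) × (Fin n → ℂ)) →ₛₗ[starRingEnd ℂ] ((Fin n → ℂ) × (Fin n → ℂ)))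
    (hι : ∀ p ∈ L, ι p = p)
    (Λ : Submodule ℂ ((Fin n → ℂ) × (Fin n → ℂ)))
    (hΛdim : Module.finrank ℂ Λ = n)
    (hΛlag : ∀ X ∈ Λ, ∀ Y ∈ Λ, sigmaC n X Y = 0) :
    (∀ ρ ∈ Λ, ρ ≠ 0 → 0 < 1 / Complex.I * sigmaC n ρ (ι ρ)) ↔
      ∃ St : Matrix (Fin n) (Fin n) ℂ, Stᵀ = St ∧
        (Λ : Set ((Fin n → ℂ) × (Fin n → ℂ)))
          = {p | p.2 = (2 / Complex.I) • (St *ᵥ p.1)} ∧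
        ∀ x : Fin n → ℂ, x ≠ 0 → 0 < Φ x - ((St *ᵥ x) ⬝ᵥ x).re := by
  classical
  have hIne : Complex.I ≠ 0 := Complex.I_ne_zero
  have hdet : IsUnit H.det := (Matrix.isUnit_iff_isUnit_det H).mp hH.isUnit
  have hHinv : ∀ v : Fin n → ℂ, H *ᵥ (H⁻¹ *ᵥ v) = v := fun v => by
    rw [Matrix.mulVec_mulVec, Matrix.mul_nonsing_inv _ hdet, Matrix.one_mulVec]
  have hinv_inj : ∀ v : Fin n → ℂ, H⁻¹ *ᵥ v = 0 → v = 0 := by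
    intro v hv
    have h := hHinv v
    rw [hv, Matrix.mulVec_zero] at h
    exact h.symm
  have hstar_fun : ∀ v : Fin n → ℂ, (fun j => starRingEnd ℂ (v j)) = star v := by
    intro v; funext j; rfl
  set hd : (Fin n → ℂ) → ℂ := fun v => star v ⬝ᵥ (H *ᵥ v) with hhd
  set zv : (Fin n → ℂ) → (Fin n → ℂ) → (Fin n → ℂ) :=
    fun y η => H⁻¹ *ᵥ star ((Complex.I / 2) • η - S *ᵥ y) with hzv
  -- self-conjugacy of the Hermitian form
  have hdconj : ∀ v, (starRingEnd ℂ) (hd v) = hd v := by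
    intro v
    have h1 : star (star v ⬝ᵥ (H *ᵥ v)) = star (H *ᵥ v) ⬝ᵥ v := by
      rw [star_dotProduct, star_star]
    calc (starRingEnd ℂ) (hd v) = star (H *ᵥ v) ⬝ᵥ v := by rw [starRingEnd_apply]; exact h1
      _ = (star v ᵥ* Hᴴ) ⬝ᵥ v := by rw [star_mulVec]
      _ = star v ⬝ᵥ (Hᴴ *ᵥ v) := by rw [dotProduct_mulVec]
      _ = hd v := by rw [hH.isHermitian.eq]
  have hdim0 : ∀ v, (hd v).im = 0 := by
    intro v
    exact Complex.conj_eq_iff_im.mp (hdconj v)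
  have hdpos : ∀ v, v ≠ 0 → 0 < (hd v).re := by
    intro v hv
    exact hH.re_dotProduct_pos hv
  have hdnonneg : ∀ v, 0 ≤ (hd v).re := by
    intro v
    rcases eq_or_ne v 0 with rfl | hv
    · simp [hhd]
    · exact (hdpos v hv).le
  -- membership of graph points in L
  have hmemL : ∀ x : Fin n → ℂ,
      (x, (2 / Complex.I) • (S *ᵥ x + star (H *ᵥ x))) ∈ L := by
    intro x
    rw [hL]
    show (2 / Complex.I) • (S *ᵥ x + star (H *ᵥ x)) =
      (2 / Complex.I) • (S *ᵥ x + fun j => starRingEnd ℂ ((H *ᵥ x) j))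
    rw [hstar_fun]
  -- the explicit formula for ι
  have hiota : ∀ y η : Fin n → ℂ,
      ι (y, η) = (zv y η, (2 / Complex.I) • (S *ᵥ zv y η + star (H *ᵥ y))) := by
    intro y η
    set z : Fin n → ℂ := zv y η with hz
    have hHz : H *ᵥ z = star ((Complex.I / 2) • η - S *ᵥ y) := by
      rw [hz, hzv]; exact hHinv _
    set u : Fin n → ℂ := (1/2 : ℂ) • (y + z) with hu
    set w : Fin n → ℂ := (-(Complex.I)/2) • (y - z) with hw
    have hs1 : Complex.I * (-(Complex.I)/2) = 1/2 := by
      linear_combination (-1/2 : ℂ) * Complex.I_mul_I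
    have huw1 : u + Complex.I • w = y := by
      rw [hu, hw, smul_smul, hs1]
      module
    have huw2 : u - Complex.I • w = z := by
      rw [hu, hw, smul_smul, hs1]
      module
    have hfu := hι _ (hmemL u)
    have hfw := hι _ (hmemL w)
    have hsc1 : ∀ v : Fin n → ℂ, Complex.I • ((2 / Complex.I) • v) = (2 / Complex.I) • (Complex.I • v) := by
      intro v; rw [smul_smul, smul_smul]; ring_nf
    have hstar_add : ∀ a b : Fin n → ℂ, star (H *ᵥ a) + Complex.I • star (H *ᵥ b)
        = star (H *ᵥ (a - Complex.I • b)) := by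
      intro a b
      rw [Matrix.mulVec_sub, Matrix.mulVec_smul, star_sub, star_smul]
      simp [sub_neg_eq_add]
    have hstar_sub : ∀ a b : Fin n → ℂ, star (H *ᵥ a) - Complex.I • star (H *ᵥ b)
        = star (H *ᵥ (a + Complex.I • b)) := by
      intro a b
      rw [Matrix.mulVec_add, Matrix.mulVec_smul, star_add, star_smul]
      simp [sub_eq_add_neg]
    have hsnd1 : (2 / Complex.I) • (S *ᵥ u + star (H *ᵥ u))
        + Complex.I • ((2 / Complex.I) • (S *ᵥ w + star (H *ᵥ w))) = η := by
      rw [hsc1, ← smul_add]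
      have e0 : S *ᵥ u + star (H *ᵥ u) + Complex.I • (S *ᵥ w + star (H *ᵥ w))
          = (S *ᵥ u + Complex.I • (S *ᵥ w)) + (star (H *ᵥ u) + Complex.I • star (H *ᵥ w)) := by
        rw [smul_add]; abel
      rw [e0]
      have e1 : S *ᵥ u + Complex.I • (S *ᵥ w) = S *ᵥ y := by
        rw [← Matrix.mulVec_smul, ← Matrix.mulVec_add, huw1]
      have e2 : star (H *ᵥ u) + Complex.I • star (H *ᵥ w)
          = (Complex.I/2) • η - S *ᵥ y := by
        rw [hstar_add, huw2, hHz, star_star]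
      rw [e1, e2]
      have e3 : S *ᵥ y + ((Complex.I/2) • η - S *ᵥ y) = (Complex.I/2) • η := by abel
      rw [e3, smul_smul]
      have : 2 / Complex.I * (Complex.I / 2) = 1 := by
        field_simp
      rw [this, one_smul]
    have hsnd2 : (2 / Complex.I) • (S *ᵥ u + star (H *ᵥ u))
        - Complex.I • ((2 / Complex.I) • (S *ᵥ w + star (H *ᵥ w)))
        = (2 / Complex.I) • (S *ᵥ z + star (H *ᵥ y)) := by
      rw [hsc1, ← smul_sub]
      congr 1
      have e0 : S *ᵥ u + star (H *ᵥ u) - Complex.I • (S *ᵥ w + star (H *ᵥ w))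
          = (S *ᵥ u - Complex.I • (S *ᵥ w)) + (star (H *ᵥ u) - Complex.I • star (H *ᵥ w)) := by
        rw [smul_add]; abel
      rw [e0]
      have e1 : S *ᵥ u - Complex.I • (S *ᵥ w) = S *ᵥ z := by
        rw [← Matrix.mulVec_smul, ← Matrix.mulVec_sub, huw2]
      have e2 : star (H *ᵥ u) - Complex.I • star (H *ᵥ w) = star (H *ᵥ y) := by
        rw [hstar_sub, huw1]
      rw [e1, e2]
    have hprod : (y, η) = ((u, (2 / Complex.I) • (S *ᵥ u + star (H *ᵥ u)))
        + Complex.I • (w, (2 / Complex.I) • (S *ᵥ w + star (H *ᵥ w)))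
        : (Fin n → ℂ) × (Fin n → ℂ)) := by
      rw [Prod.smul_mk, Prod.mk_add_mk]
      exact Prod.ext huw1.symm hsnd1.symm
    rw [hprod, map_add, LinearMap.map_smulₛₗ, hfu, hfw, Complex.conj_I]
    rw [Prod.smul_mk, Prod.mk_add_mk]
    refine Prod.ext ?_ ?_
    · show u + (-Complex.I) • w = z
      rw [neg_smul, ← sub_eq_add_neg]
      exact huw2
    · show (2 / Complex.I) • (S *ᵥ u + star (H *ᵥ u))
        + (-Complex.I) • ((2 / Complex.I) • (S *ᵥ w + star (H *ᵥ w)))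
        = (2 / Complex.I) • (S *ᵥ z + star (H *ᵥ y))
      rw [neg_smul, ← sub_eq_add_neg]
      exact hsnd2
  -- the value formula
  have hval : ∀ y η : Fin n → ℂ,
      1 / Complex.I * sigmaC n (y, η) (ι (y, η)) = 2 * (hd y - hd (zv y η)) := by
    intro y η
    rw [hiota y η]
    set z : Fin n → ℂ := zv y η with hz
    have hHz : H *ᵥ z = star ((Complex.I / 2) • η - S *ᵥ y) := by
      rw [hz, hzv]; exact hHinv _
    have hσ : sigmaC n (y, η) (z, (2 / Complex.I) • (S *ᵥ z + star (H *ᵥ y)))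
        = η ⬝ᵥ z - ((2 / Complex.I) • (S *ᵥ z + star (H *ᵥ y))) ⬝ᵥ y := rfl
    rw [hσ]
    have e1 : ((2 / Complex.I) • (S *ᵥ z + star (H *ᵥ y))) ⬝ᵥ y
        = (2 / Complex.I) * ((S *ᵥ y) ⬝ᵥ z) + (2 / Complex.I) * (star (H *ᵥ y) ⬝ᵥ y) := by
      rw [smul_dotProduct, add_dotProduct, smul_eq_mul, mul_add]
      congr 2
      rw [dotProduct_comm]
      rw [Matrix.dotProduct_mulVec]
      conv_lhs => rw [← hS, Matrix.vecMul_transpose]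
    rw [e1]
    have e2 : η ⬝ᵥ z - (2 / Complex.I) * ((S *ᵥ y) ⬝ᵥ z)
        = (2 / Complex.I) * (star (H *ᵥ z) ⬝ᵥ z) := by
      have h1 : star (H *ᵥ z) = (Complex.I/2) • η - S *ᵥ y := by rw [hHz, star_star]
      rw [h1, sub_dotProduct, smul_dotProduct, smul_eq_mul]
      field_simp
    have e4 : ∀ v : Fin n → ℂ, star (H *ᵥ v) ⬝ᵥ v = hd v := by
      intro v
      rw [star_dotProduct]
      have := hdconj v
      rw [starRingEnd_apply] at this
      exact this
    calc 1 / Complex.I * (η ⬝ᵥ z - ((2 / Complex.I) * ((S *ᵥ y) ⬝ᵥ z)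
          + (2 / Complex.I) * (star (H *ᵥ y) ⬝ᵥ y)))
        = 1 / Complex.I * ((η ⬝ᵥ z - (2 / Complex.I) * ((S *ᵥ y) ⬝ᵥ z))
          - (2 / Complex.I) * (star (H *ᵥ y) ⬝ᵥ y)) := by ring
      _ = 1 / Complex.I * ((2 / Complex.I) * (star (H *ᵥ z) ⬝ᵥ z)
          - (2 / Complex.I) * (star (H *ᵥ y) ⬝ᵥ y)) := by rw [e2]
      _ = 1 / Complex.I * ((2 / Complex.I) * hd z - (2 / Complex.I) * hd y) := by
          rw [e4, e4]
      _ = (2 / (Complex.I * Complex.I)) * (hd z - hd y) := by ring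
      _ = 2 * (hd y - hd z) := by
          rw [Complex.I_mul_I]
          ring
  -- re/im helpers
  have hre2 : ∀ a b : ℂ, (2 * (a - b)).re = 2 * (a.re - b.re) := by
    intro a b
    simp [Complex.mul_re]
  have him2 : ∀ a b : ℂ, (2 * (a - b)).im = 2 * (a.im - b.im) := by
    intro a b
    simp [Complex.mul_im]
  have hsum : ∀ x : Fin n → ℂ,
      (∑ j, ∑ k, H j k * x k * starRingEnd ℂ (x j)) = hd x := by
    intro x
    simp only [hhd]
    simp only [dotProduct, Matrix.mulVec, Pi.star_apply]
    apply Finset.sum_congr rfl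
    intro j _
    rw [Finset.mul_sum]
    apply Finset.sum_congr rfl
    intro k _
    rw [starRingEnd_apply]
    ring
  constructor
  · -- forward direction
    intro hpos
    have hker : ∀ η : Fin n → ℂ, ((0 : Fin n → ℂ), η) ∈ Λ → η = 0 := by
      intro η hmem
      by_contra hne
      have hρne : (((0 : Fin n → ℂ), η) : (Fin n → ℂ) × (Fin n → ℂ)) ≠ 0 := by
        simp [Prod.ext_iff, hne]
      have h1 := hpos _ hmem hρne
      rw [hval 0 η] at h1
      have hz0 : zv 0 η ≠ 0 := by
        intro h
        simp only [hzv] at h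
        have h2 := hinv_inj _ h
        rw [Matrix.mulVec_zero, sub_zero] at h2
        have h3 : (Complex.I/2) • η = 0 := by
          have := congrArg star h2
          simpa using this
        rcases smul_eq_zero.mp h3 with h4 | h4
        · exact (div_ne_zero hIne two_ne_zero) h4
        · exact hne h4
      have hd0 : hd (0 : Fin n → ℂ) = 0 := by simp [hhd]
      have h2 := (Complex.lt_def.mp h1).1
      rw [Complex.zero_re, hre2, hd0] at h2
      have := hdpos _ hz0
      simp only [Complex.zero_re] at h2
      linarith
    set f : Λ →ₗ[ℂ] (Fin n → ℂ) :=
      (LinearMap.fst ℂ (Fin n → ℂ) (Fin n → ℂ)).comp Λ.subtype with hf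
    have hfinj : Function.Injective f := by
      rw [← LinearMap.ker_eq_bot]
      apply (Submodule.eq_bot_iff _).mpr
      rintro ⟨p, hp⟩ hx
      have h1 : p.1 = 0 := hx
      have h2 : ((0 : Fin n → ℂ), p.2) ∈ Λ := by
        rw [← h1]
        simpa using hp
      have h3 := hker _ h2
      apply Subtype.ext
      exact Prod.ext h1 h3
    have hrange : LinearMap.range f = ⊤ := by
      have h1 : Module.finrank ℂ (LinearMap.range f) = n := by
        rw [LinearMap.finrank_range_of_inj hfinj, hΛdim]
      apply Submodule.eq_top_of_finrank_eq
      rw [h1, Module.finrank_fin_fun]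
    have hfsurj : Function.Surjective f := LinearMap.range_eq_top.mp hrange
    set e : Λ ≃ₗ[ℂ] (Fin n → ℂ) := LinearEquiv.ofBijective f ⟨hfinj, hfsurj⟩ with he
    set T : (Fin n → ℂ) →ₗ[ℂ] (Fin n → ℂ) :=
      (LinearMap.snd ℂ (Fin n → ℂ) (Fin n → ℂ)).comp
        (Λ.subtype.comp (e.symm : (Fin n → ℂ) →ₗ[ℂ] Λ)) with hT
    have hT1 : ∀ x : Fin n → ℂ, (x, T x) ∈ Λ := by
      intro x
      have h1 : ((e.symm x : Λ) : (Fin n → ℂ) × (Fin n → ℂ)) ∈ Λ := (e.symm x).2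
      have h2 : ((e.symm x : Λ) : (Fin n → ℂ) × (Fin n → ℂ)).1 = x := e.apply_symm_apply x
      have h3 : T x = ((e.symm x : Λ) : (Fin n → ℂ) × (Fin n → ℂ)).2 := rfl
      have h4 : ((x, T x) : (Fin n → ℂ) × (Fin n → ℂ))
          = ((e.symm x : Λ) : (Fin n → ℂ) × (Fin n → ℂ)) := Prod.ext h2.symm h3
      rw [h4]
      exact h1
    have hT2 : ∀ p : (Fin n → ℂ) × (Fin n → ℂ), p ∈ Λ → p.2 = T p.1 := by
      intro p hp
      have h1 := hT1 p.1
      have h0 : p - (p.1, T p.1) = ((0 : Fin n → ℂ), p.2 - T p.1) := by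
        apply Prod.ext
        · simp
        · simp
      have h2 : ((0 : Fin n → ℂ), p.2 - T p.1) ∈ Λ := by
        rw [← h0]
        exact Submodule.sub_mem Λ hp h1
      have := hker _ h2
      exact sub_eq_zero.mp this
    set Mm : Matrix (Fin n) (Fin n) ℂ := LinearMap.toMatrix' T with hMm
    have hMv : ∀ x, Mm *ᵥ x = T x := by
      intro x
      rw [hMm, ← Matrix.toLin'_apply, Matrix.toLin'_toMatrix']
    have hTdot : ∀ a b : Fin n → ℂ, (T a) ⬝ᵥ b = (T b) ⬝ᵥ a := by
      intro a b
      have h0 := hΛlag (a, T a) (hT1 a) (b, T b) (hT1 b)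
      have h1 : (T a) ⬝ᵥ b - (T b) ⬝ᵥ a = 0 := h0
      exact sub_eq_zero.mp h1
    have hMsingle : ∀ (j k : Fin n), Mm j k = T (Pi.single k 1) j := by
      intro j k
      rw [← hMv]
      simp [Matrix.mulVec_single]
    have hMsym : Mmᵀ = Mm := by
      apply Matrix.ext
      intro j k
      rw [Matrix.transpose_apply, hMsingle k j, hMsingle j k]
      have h2 := hTdot (Pi.single k 1) (Pi.single j 1)
      have e1 : T (Pi.single k 1) ⬝ᵥ Pi.single j 1 = T (Pi.single k 1) j := by
        simp
      have e2 : T (Pi.single j 1) ⬝ᵥ Pi.single k 1 = T (Pi.single j 1) k := by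
        simp
      rw [e1, e2] at h2
      exact h2.symm
    have hscal : (2 / Complex.I) * (Complex.I / 2) = 1 := by
      field_simp
    have hsc : ∀ v : Fin n → ℂ,
        (2 / Complex.I) • (((Complex.I/2) • Mm) *ᵥ v) = T v := by
      intro v
      rw [Matrix.smul_mulVec, smul_smul, hscal, one_smul, hMv]
    refine ⟨(Complex.I/2) • Mm, ?_, ?_, ?_⟩
    · rw [Matrix.transpose_smul, hMsym]
    · ext p
      simp only [SetLike.mem_coe, Set.mem_setOf_eq]
      constructor
      · intro hp
        rw [hsc]
        exact hT2 p hp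
      · intro hp
        have h1 : p = (p.1, T p.1) := Prod.ext rfl (by rw [hp, hsc])
        have h2 := hT1 p.1
        rw [← h1] at h2
        exact h2
    · intro x hx
      set B : Matrix (Fin n) (Fin n) ℂ := (Complex.I/2) • Mm - S with hB
      have hBsym : Bᵀ = B := by
        rw [hB, Matrix.transpose_sub, Matrix.transpose_smul, hMsym, hS]
      have hzB : ∀ y : Fin n → ℂ, zv y (T y) = H⁻¹ *ᵥ star (B *ᵥ y) := by
        intro y
        simp only [hzv]
        congr 1
        congr 1
        rw [hB, Matrix.sub_mulVec, Matrix.smul_mulVec, hMv]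
      have condA : ∀ y : Fin n → ℂ, y ≠ 0 →
          (star (H⁻¹ *ᵥ star (B *ᵥ y)) ⬝ᵥ (H *ᵥ (H⁻¹ *ᵥ star (B *ᵥ y)))).re
            < (star y ⬝ᵥ (H *ᵥ y)).re := by
        intro y hy0
        have hmem := hT1 y
        have hne : ((y, T y) : (Fin n → ℂ) × (Fin n → ℂ)) ≠ 0 := by
          simp [Prod.ext_iff, hy0]
        have h1 := hpos _ hmem hne
        rw [hval y (T y)] at h1
        have h2 := (Complex.lt_def.mp h1).1
        rw [Complex.zero_re, hre2, hzB] at h2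
        simp only [hhd] at h2
        linarith
      have condB := (aux2 H B hH hBsym).mp condA
      have h1 := condB x hx
      rw [hΦ x, hsum x]
      have h2 : (((Complex.I/2) • Mm) *ᵥ x ⬝ᵥ x).re
          = ((B *ᵥ x) ⬝ᵥ x).re + ((S *ᵥ x) ⬝ᵥ x).re := by
        have h3 : ((Complex.I/2) • Mm) *ᵥ x = B *ᵥ x + S *ᵥ x := by
          rw [hB, Matrix.sub_mulVec]
          abel
        rw [h3, add_dotProduct, Complex.add_re]
      rw [h2]
      simp only [hhd] at h1 ⊢
      linarith
  · -- backward direction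
    rintro ⟨St, hStsym, hΛeq, hform⟩ ρ hρ hρne
    set B : Matrix (Fin n) (Fin n) ℂ := St - S with hB
    have hBsym : Bᵀ = B := by rw [hB, Matrix.transpose_sub, hStsym, hS]
    have hρ2 : ρ.2 = (2 / Complex.I) • (St *ᵥ ρ.1) := by
      have h0 : ρ ∈ {p : (Fin n → ℂ) × (Fin n → ℂ) |
          p.2 = (2 / Complex.I) • (St *ᵥ p.1)} := by
        rw [← hΛeq]
        exact hρ
      exact h0
    have hx : ρ.1 ≠ 0 := by
      intro h0
      apply hρne
      exact Prod.ext h0 (by rw [hρ2, h0, Matrix.mulVec_zero, smul_zero]; rfl)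
    have condB : ∀ x : Fin n → ℂ, x ≠ 0 →
        ((B *ᵥ x) ⬝ᵥ x).re < (star x ⬝ᵥ (H *ᵥ x)).re := by
      intro x hx0
      have h1 := hform x hx0
      rw [hΦ x, hsum x] at h1
      have h2 : ((St *ᵥ x) ⬝ᵥ x).re = ((B *ᵥ x) ⬝ᵥ x).re + ((S *ᵥ x) ⬝ᵥ x).re := by
        have h3 : St *ᵥ x = B *ᵥ x + S *ᵥ x := by
          rw [hB, Matrix.sub_mulVec]
          abel
        rw [h3, add_dotProduct, Complex.add_re]
      simp only [hhd] at h1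
      linarith
    have condA := (aux2 H B hH hBsym).mpr condB
    have hscal : Complex.I / 2 * (2 / Complex.I) = 1 := by
      field_simp
    have hzB : zv ρ.1 ρ.2 = H⁻¹ *ᵥ star (B *ᵥ ρ.1) := by
      simp only [hzv]
      congr 1
      congr 1
      rw [hρ2, smul_smul, hscal, one_smul, hB, Matrix.sub_mulVec]
    have hρeta : ρ = (ρ.1, ρ.2) := rfl
    rw [hρeta, hval ρ.1 ρ.2, hzB]
    rw [Complex.lt_def]
    constructor
    · rw [Complex.zero_re, hre2]
      have h4 := condA ρ.1 hx
      simp only [hhd]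
      linarith
    · rw [Complex.zero_im, him2]
      rw [hdim0, hdim0]
      ring
end

section
/- Let ω₁, ω₂ be positive real numbers with ω₁ ≠ ω₂ and let g be real, and let F be the complex 4×4 matrix F = [[0,0,1,0],[0,0,0,1],[−ω₁²,−ig,0,0],[−ig,−ω₂²,0,0]]. Then F is diagonalizable over ℂ if and only if 4g² ≠ (ω₁² − ω₂²)²; moreover, when 4g² ≠ (ω₁² − ω₂²)², F has four pairwise distinct eigenvalues λ, characterized by λ² = −(ω₁² + ω₂²)/2 ± ((ω₁² − ω₂²)²/4 − g²)^{1/2}. -/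
open Matrix

private lemma det_fin_four' (A : Matrix (Fin 4) (Fin 4) ℂ) :
    A.det =
      A 0 0 * A 1 1 * A 2 2 * A 3 3 - A 0 0 * A 1 1 * A 2 3 * A 3 2 -
      A 0 0 * A 1 2 * A 2 1 * A 3 3 + A 0 0 * A 1 2 * A 2 3 * A 3 1 +
      A 0 0 * A 1 3 * A 2 1 * A 3 2 - A 0 0 * A 1 3 * A 2 2 * A 3 1 -
      A 0 1 * A 1 0 * A 2 2 * A 3 3 + A 0 1 * A 1 0 * A 2 3 * A 3 2 +
      A 0 1 * A 1 2 * A 2 0 * A 3 3 - A 0 1 * A 1 2 * A 2 3 * A 3 0 -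
      A 0 1 * A 1 3 * A 2 0 * A 3 2 + A 0 1 * A 1 3 * A 2 2 * A 3 0 +
      A 0 2 * A 1 0 * A 2 1 * A 3 3 - A 0 2 * A 1 0 * A 2 3 * A 3 1 -
      A 0 2 * A 1 1 * A 2 0 * A 3 3 + A 0 2 * A 1 1 * A 2 3 * A 3 0 +
      A 0 2 * A 1 3 * A 2 0 * A 3 1 - A 0 2 * A 1 3 * A 2 1 * A 3 0 -
      A 0 3 * A 1 0 * A 2 1 * A 3 2 + A 0 3 * A 1 0 * A 2 2 * A 3 1 +
      A 0 3 * A 1 1 * A 2 0 * A 3 2 - A 0 3 * A 1 1 * A 2 2 * A 3 0 -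
      A 0 3 * A 1 2 * A 2 0 * A 3 1 + A 0 3 * A 1 2 * A 2 1 * A 3 0 := by
  simp only [Matrix.det_succ_row_zero, Fin.sum_univ_succ, Matrix.submatrix_apply, Fin.succAbove,
    Finset.univ_unique, Finset.sum_singleton, Matrix.det_unique]
  norm_num [Fin.ext_iff, Fin.lt_def, Fin.castSucc, Fin.castAdd, Fin.castLE, Fin.succ]
  simp only [show (⟨2, by norm_num⟩ : Fin 4) = 2 from rfl,
    show (⟨3, by norm_num⟩ : Fin 4) = 3 from rfl]
  ring

private lemma detFun (a b G lam : ℂ) :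
    (!![0,0,1,0;0,0,0,1;-a,-G,0,0;-G,-b,0,0] - lam • 1).det
      = (lam^2)^2 + (a+b)*lam^2 + (a*b - G^2) := by
  simp only [Matrix.det_succ_row_zero, Fin.sum_univ_succ, Matrix.sub_apply, Matrix.smul_apply,
    Matrix.one_apply, Fin.succAbove, Matrix.submatrix_apply]
  norm_num [Fin.ext_iff, Fin.lt_def, Matrix.vecHead, Matrix.vecTail]
  simp [Matrix.vecHead, Matrix.vecTail]
  ring

private lemma sq_ker {n : Type*} [Fintype n] [DecidableEq n] (P : Matrix n n ℂ) (E : n → ℂ)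
    (hP : IsUnit P) (v : n → ℂ)
    (h2 : (P * diagonal E * P⁻¹) *ᵥ ((P * diagonal E * P⁻¹) *ᵥ v) = 0) :
    (P * diagonal E * P⁻¹) *ᵥ v = 0 := by
  have hPd : IsUnit P.det := (Matrix.isUnit_iff_isUnit_det P).mp hP
  have h1 : P⁻¹ * P = 1 := Matrix.nonsing_inv_mul P hPd
  have key : ∀ x : n → ℂ, (P * diagonal E * P⁻¹) *ᵥ x = P *ᵥ (diagonal E *ᵥ (P⁻¹ *ᵥ x)) := by
    intro x; rw [← Matrix.mulVec_mulVec, ← Matrix.mulVec_mulVec]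
  rw [key, key] at h2
  have h3 : P⁻¹ *ᵥ (P *ᵥ (diagonal E *ᵥ (P⁻¹ *ᵥ v))) = diagonal E *ᵥ (P⁻¹ *ᵥ v) := by
    rw [Matrix.mulVec_mulVec, h1, Matrix.one_mulVec]
  rw [h3] at h2
  have h4 : diagonal E *ᵥ (diagonal E *ᵥ (P⁻¹ *ᵥ v)) = 0 := by
    have h5 := congrArg (fun x => P⁻¹ *ᵥ x) h2
    simp only [Matrix.mulVec_zero] at h5
    rwa [Matrix.mulVec_mulVec, h1, Matrix.one_mulVec] at h5
  have h5 : diagonal E *ᵥ (P⁻¹ *ᵥ v) = 0 := by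
    funext i
    have h6 := congrFun h4 i
    simp only [Matrix.mulVec_diagonal, Pi.zero_apply] at h6 ⊢
    rcases mul_eq_zero.mp h6 with h | h
    · rw [h, zero_mul]
    · exact h
  rw [key, h5, Matrix.mulVec_zero]

private lemma sq_iff (x y : ℂ) : x^2 = y^2 ↔ x = y ∨ x = -y := by
  constructor
  · intro h
    have h1 : (x - y) * (x + y) = 0 := by linear_combination h
    rcases mul_eq_zero.mp h1 with h2 | h2
    · exact Or.inl (sub_eq_zero.mp h2)
    · exact Or.inr (by linear_combination h2)
  · rintro (rfl | rfl) <;> ring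

private lemma diag_conj (P Dm F : Matrix (Fin 4) (Fin 4) ℂ) (hP : IsUnit P.det)
    (h : F * P = P * Dm) : F = P * Dm * P⁻¹ := by
  have hPP : P * P⁻¹ = 1 := Matrix.mul_nonsing_inv P hP
  calc F = F * (P * P⁻¹) := by rw [hPP, mul_one]
    _ = (F * P) * P⁻¹ := by rw [mul_assoc]
    _ = P * Dm * P⁻¹ := by rw [h]

set_option maxHeartbeats 3200000 in
/-- the fundamental matrix `F` of the Cannata–Ioffe–Nishnianidze
oscillator is diagonalizable over `ℂ` iff `4g² ≠ (ω₁² − ω₂²)²`; in that case it has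
four pairwise distinct eigenvalues `λ`, characterized by
`λ² = −(ω₁² + ω₂²)/2 ± ((ω₁² − ω₂²)²/4 − g²)^{1/2}`. -/
theorem stmt_17 (ω₁ ω₂ g : ℝ) (hω₁ : 0 < ω₁) (hω₂ : 0 < ω₂) (hne : ω₁ ≠ ω₂)
    (F : Matrix (Fin 4) (Fin 4) ℂ)
    (hF : F = !![0, 0, 1, 0;
                 0, 0, 0, 1;
                 -(ω₁ : ℂ) ^ 2, -Complex.I * g, 0, 0;
                 -Complex.I * g, -(ω₂ : ℂ) ^ 2, 0, 0]) :
    ((∃ (P : Matrix (Fin 4) (Fin 4) ℂ) (D : Fin 4 → ℂ),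
        IsUnit P ∧ F = P * Matrix.diagonal D * P⁻¹) ↔
      4 * g ^ 2 ≠ (ω₁ ^ 2 - ω₂ ^ 2) ^ 2) ∧
    (4 * g ^ 2 ≠ (ω₁ ^ 2 - ω₂ ^ 2) ^ 2 →
      {lam : ℂ | (F - lam • 1).det = 0}.ncard = 4 ∧
      ∃ s : ℂ, s ^ 2 = (((ω₁ ^ 2 - ω₂ ^ 2) ^ 2 / 4 - g ^ 2 : ℝ) : ℂ) ∧
        ∀ lam : ℂ, (F - lam • 1).det = 0 ↔
          (lam ^ 2 = -(((ω₁ ^ 2 + ω₂ ^ 2) / 2 : ℝ) : ℂ) + s ∨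
           lam ^ 2 = -(((ω₁ ^ 2 + ω₂ ^ 2) / 2 : ℝ) : ℂ) - s)) := by
  set a : ℂ := (ω₁ : ℂ) ^ 2 with ha
  set b : ℂ := (ω₂ : ℂ) ^ 2 with hb
  set G : ℂ := Complex.I * (g : ℂ) with hGdef
  have hF' : F = !![(0:ℂ),0,1,0;0,0,0,1;-a,-G,0,0;-G,-b,0,0] := by
    rw [hF]
    ext i j
    fin_cases i <;> fin_cases j <;> simp [hGdef, neg_mul]
  have hG2 : G ^ 2 = -(g:ℂ) ^ 2 := by rw [hGdef, mul_pow, Complex.I_sq]; ring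
  have hdet : ∀ lam : ℂ, (F - lam • 1).det = (lam^2)^2 + (a+b)*lam^2 + (a*b - G^2) := by
    intro lam; rw [hF']; exact detFun a b G lam
  have habR : ω₁ ^ 2 ≠ ω₂ ^ 2 := by
    intro h
    have h1 : (ω₁ - ω₂) * (ω₁ + ω₂) = 0 := by ring_nf; linarith
    rcases mul_eq_zero.mp h1 with h2 | h2
    · exact hne (by linarith)
    · linarith
  have hab : a ≠ b := by
    rw [ha, hb]
    intro h
    exact habR (by exact_mod_cast h)
  have hprodR : a * b - G ^ 2 ≠ 0 := by
    rw [ha, hb, hG2]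
    intro h
    have h2 : ((ω₁ ^ 2 * ω₂ ^ 2 + g ^ 2 : ℝ) : ℂ) = 0 := by push_cast; linear_combination h
    have h3 : (ω₁ ^ 2 * ω₂ ^ 2 + g ^ 2 : ℝ) = 0 := by exact_mod_cast h2
    nlinarith [mul_pos (pow_pos hω₁ 2) (pow_pos hω₂ 2), sq_nonneg g]
  -- main construction under the hypothesis 4g² ≠ (ω₁²-ω₂²)²
  have main : 4 * g ^ 2 ≠ (ω₁ ^ 2 - ω₂ ^ 2) ^ 2 →
      (∃ (P : Matrix (Fin 4) (Fin 4) ℂ) (D : Fin 4 → ℂ),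
        IsUnit P ∧ F = P * Matrix.diagonal D * P⁻¹) ∧
      ({lam : ℂ | (F - lam • 1).det = 0}.ncard = 4 ∧
      ∃ s : ℂ, s ^ 2 = (((ω₁ ^ 2 - ω₂ ^ 2) ^ 2 / 4 - g ^ 2 : ℝ) : ℂ) ∧
        ∀ lam : ℂ, (F - lam • 1).det = 0 ↔
          (lam ^ 2 = -(((ω₁ ^ 2 + ω₂ ^ 2) / 2 : ℝ) : ℂ) + s ∨
           lam ^ 2 = -(((ω₁ ^ 2 + ω₂ ^ 2) / 2 : ℝ) : ℂ) - s)) := by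
    intro hne4
    obtain ⟨s, hs⟩ := IsAlgClosed.exists_pow_nat_eq
      ((((ω₁ ^ 2 - ω₂ ^ 2) ^ 2 / 4 - g ^ 2 : ℝ)) : ℂ) (n := 2) two_pos
    have hsC : s ^ 2 = (a - b) ^ 2 / 4 + G ^ 2 := by
      rw [ha, hb, hG2, hs]; push_cast; ring
    have hcR : ((ω₁ ^ 2 - ω₂ ^ 2) ^ 2 / 4 - g ^ 2 : ℝ) ≠ 0 := by
      intro h; exact hne4 (by linarith)
    have hs0 : s ≠ 0 := by
      intro h
      apply hcR
      have h2 : (((ω₁ ^ 2 - ω₂ ^ 2) ^ 2 / 4 - g ^ 2 : ℝ) : ℂ) = 0 := by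
        rw [← hs, h]; norm_num
      exact_mod_cast h2
    have hfac : ∀ lam : ℂ,
        (F - lam • 1).det = (lam^2 - (-(a+b)/2 + s)) * (lam^2 - (-(a+b)/2 - s)) := by
      intro lam; rw [hdet lam]; linear_combination hsC
    have hchar : ∀ lam : ℂ,
        (F - lam • 1).det = 0 ↔ (lam^2 = -(a+b)/2 + s ∨ lam^2 = -(a+b)/2 - s) := by
      intro lam
      rw [hfac lam, mul_eq_zero, sub_eq_zero, sub_eq_zero]
    have hprod : (-(a+b)/2 + s) * (-(a+b)/2 - s) = a * b - G ^ 2 := by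
      linear_combination -hsC
    have hmp0 : -(a+b)/2 + s ≠ 0 := fun h => hprodR (by rw [← hprod, h, zero_mul])
    have hmm0 : -(a+b)/2 - s ≠ 0 := fun h => hprodR (by rw [← hprod, h, mul_zero])
    have hmpmm : -(a+b)/2 + s ≠ -(a+b)/2 - s := by
      intro h; exact hs0 (by linear_combination h / 2)
    obtain ⟨r, hr⟩ := IsAlgClosed.exists_pow_nat_eq (-(a+b)/2 + s) (n := 2) two_pos
    obtain ⟨t, ht⟩ := IsAlgClosed.exists_pow_nat_eq (-(a+b)/2 - s) (n := 2) two_pos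
    have hr0 : r ≠ 0 := fun h => hmp0 (by rw [← hr, h]; ring)
    have ht0 : t ≠ 0 := fun h => hmm0 (by rw [← ht, h]; ring)
    have hrt2 : r ^ 2 ≠ t ^ 2 := by rw [hr, ht]; exact hmpmm
    refine ⟨?_, ?_, ⟨s, hs, ?_⟩⟩
    · -- diagonalization
      by_cases hg : g = 0
      · -- decoupled case
        have hG0 : G = 0 := by rw [hGdef, hg]; simp
        have hA0 : -a ≠ 0 := by
          rw [ha]
          simpa using pow_ne_zero 2 (Complex.ofReal_ne_zero.mpr hω₁.ne')
        have hB0 : -b ≠ 0 := by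
          rw [hb]
          simpa using pow_ne_zero 2 (Complex.ofReal_ne_zero.mpr hω₂.ne')
        obtain ⟨u, hu⟩ := IsAlgClosed.exists_pow_nat_eq (-a) (n := 2) two_pos
        obtain ⟨w, hw⟩ := IsAlgClosed.exists_pow_nat_eq (-b) (n := 2) two_pos
        have hu0 : u ≠ 0 := fun h => hA0 (by rw [← hu, h]; ring)
        have hw0 : w ≠ 0 := fun h => hB0 (by rw [← hw, h]; ring)
        refine ⟨!![(1:ℂ),1,0,0; 0,0,1,1; u,-u,0,0; 0,0,w,-w], ![u,-u,w,-w], ?_, ?_⟩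
        · apply (Matrix.isUnit_iff_isUnit_det _).mpr
          apply isUnit_iff_ne_zero.mpr
          have hd : (!![(1:ℂ),1,0,0; 0,0,1,1; u,-u,0,0; 0,0,w,-w]).det = -4*u*w := by
            rw [det_fin_four']; simp [Matrix.vecHead, Matrix.vecTail]; ring
          rw [hd]
          exact mul_ne_zero (mul_ne_zero (by norm_num) hu0) hw0
        · apply diag_conj
          · apply (Matrix.isUnit_iff_isUnit_det _).mp
            apply (Matrix.isUnit_iff_isUnit_det _).mpr
            apply isUnit_iff_ne_zero.mpr
            have hd : (!![(1:ℂ),1,0,0; 0,0,1,1; u,-u,0,0; 0,0,w,-w]).det = -4*u*w := by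
              rw [det_fin_four']; simp [Matrix.vecHead, Matrix.vecTail]; ring
            rw [hd]
            exact mul_ne_zero (mul_ne_zero (by norm_num) hu0) hw0
          · rw [hF', hG0]
            ext i j
            fin_cases i <;> fin_cases j <;>
              simp [Matrix.mul_apply, Fin.sum_univ_four, Matrix.diagonal] <;>
              first
                | ring1
                | linear_combination hu
                | linear_combination -hu
                | linear_combination hw
                | linear_combination -hw
      · -- coupled case
        have hGne : G ≠ 0 := by
          rw [hGdef]
          exact mul_ne_zero Complex.I_ne_zero (Complex.ofReal_ne_zero.mpr hg)
        have hr4 : (r^2)^2 + (a+b)*r^2 + (a*b - G^2) = 0 := by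
          linear_combination (r^2 + (a+b)/2 + s) * hr + hsC
        have ht4 : (t^2)^2 + (a+b)*t^2 + (a*b - G^2) = 0 := by
          linear_combination (t^2 + (a+b)/2 - s) * ht + hsC
        have hdP : (!![-G,-G,-G,-G; a+r^2, a+r^2, a+t^2, a+t^2; -(G*r), G*r, -(G*t), G*t;
            (a+r^2)*r, -((a+r^2)*r), (a+t^2)*t, -((a+t^2)*t)]).det
            = -4*G^2*r*t*(r^2-t^2)^2 := by
          rw [det_fin_four']; simp [Matrix.vecHead, Matrix.vecTail]; ring
        have hdP0 : (-4*G^2*r*t*(r^2-t^2)^2 : ℂ) ≠ 0 := by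
          apply mul_ne_zero
          apply mul_ne_zero
          apply mul_ne_zero
          apply mul_ne_zero
          · norm_num
          · exact pow_ne_zero 2 hGne
          · exact hr0
          · exact ht0
          · exact pow_ne_zero 2 (sub_ne_zero.mpr hrt2)
        refine ⟨!![-G,-G,-G,-G; a+r^2, a+r^2, a+t^2, a+t^2; -(G*r), G*r, -(G*t), G*t;
            (a+r^2)*r, -((a+r^2)*r), (a+t^2)*t, -((a+t^2)*t)], ![r,-r,t,-t], ?_, ?_⟩
        · exact (Matrix.isUnit_iff_isUnit_det _).mpr (isUnit_iff_ne_zero.mpr (hdP ▸ hdP0))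
        · apply diag_conj
          · exact isUnit_iff_ne_zero.mpr (hdP ▸ hdP0)
          · rw [hF']
            ext i j
            fin_cases i <;> fin_cases j <;>
              simp [Matrix.mul_apply, Fin.sum_univ_four, Matrix.diagonal] <;>
              first
                | ring1
                | linear_combination hr4
                | linear_combination -hr4
                | linear_combination ht4
                | linear_combination -ht4
    · -- ncard = 4
      have hseteq : {lam : ℂ | (F - lam • 1).det = 0} = {r, -r, t, -t} := by
        ext lam
        simp only [Set.mem_setOf_eq, Set.mem_insert_iff, Set.mem_singleton_iff]
        rw [hchar lam, ← hr, ← ht, sq_iff lam r, sq_iff lam t]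
        tauto
      have hrr : r ≠ -r := fun h => hr0 (by linear_combination h / 2)
      have htt : t ≠ -t := fun h => ht0 (by linear_combination h / 2)
      have hrt : r ≠ t := fun h => hrt2 (by rw [h])
      have hrmt : r ≠ -t := fun h => hrt2 (by rw [h]; ring)
      have hmrt : -r ≠ t := fun h => hrt2 (by rw [← h]; ring)
      have hmrmt : -r ≠ -t := fun h => hrt2 (by rw [neg_inj.mp h])
      rw [hseteq]
      rw [Set.ncard_insert_of_notMem (by simp [hrr, hrt, hrmt]),
        Set.ncard_insert_of_notMem (by simp [hmrt, hmrmt]),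
        Set.ncard_pair htt]
    · -- characterization
      intro lam
      have e0 : ((((ω₁ ^ 2 + ω₂ ^ 2) / 2 : ℝ)) : ℂ) = (a+b)/2 := by
        rw [ha, hb]; push_cast; ring
      rw [hchar lam, e0]
      constructor
      · rintro (h | h)
        · exact Or.inl (by linear_combination h)
        · exact Or.inr (by linear_combination h)
      · rintro (h | h)
        · exact Or.inl (by linear_combination h)
        · exact Or.inr (by linear_combination h)
  refine ⟨⟨?_, fun h => (main h).1⟩, fun h => (main h).2⟩
  rintro ⟨P, D, hP, hFPD⟩
  by_contra heq
  have heqC : 4 * (g:ℂ) ^ 2 = ((ω₁:ℂ) ^ 2 - (ω₂:ℂ) ^ 2) ^ 2 := by exact_mod_cast heq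
  have hGrel : 4 * G ^ 2 + (a - b) ^ 2 = 0 := by
    rw [ha, hb, hG2]; linear_combination -heqC
  set lam : ℂ := Complex.I * (Real.sqrt ((ω₁ ^ 2 + ω₂ ^ 2) / 2) : ℝ) with hlamdef
  have hlam2 : lam ^ 2 = -(a+b)/2 := by
    have hnn : (0:ℝ) ≤ (ω₁ ^ 2 + ω₂ ^ 2) / 2 := by positivity
    have hsq : (Real.sqrt ((ω₁ ^ 2 + ω₂ ^ 2) / 2)) ^ 2 = (ω₁ ^ 2 + ω₂ ^ 2) / 2 :=
      Real.sq_sqrt hnn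
    rw [hlamdef, ha, hb, mul_pow, Complex.I_sq]
    rw [show ((Real.sqrt ((ω₁ ^ 2 + ω₂ ^ 2) / 2) : ℝ) : ℂ) ^ 2
        = (((Real.sqrt ((ω₁ ^ 2 + ω₂ ^ 2) / 2)) ^ 2 : ℝ) : ℂ) by push_cast; ring]
    rw [hsq]
    push_cast
    ring
  have hab' : b - a ≠ 0 := sub_ne_zero.mpr (Ne.symm hab)
  have hMv : (F - lam • 1) *ᵥ ![4*lam, 0, 4*lam^2+(b-a), -2*G]
      = ![b-a, -2*G, lam*(b-a), -2*lam*G] := by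
    rw [hF']
    funext i
    fin_cases i <;>
      simp [Matrix.mulVec, dotProduct, Fin.sum_univ_four, Matrix.sub_apply,
        Matrix.smul_apply, Matrix.one_apply, Matrix.vecHead, Matrix.vecTail] <;>
      first
        | ring1
        | linear_combination (-4*lam) * hlam2
  have hMMv : (F - lam • 1) *ᵥ ((F - lam • 1) *ᵥ ![4*lam, 0, 4*lam^2+(b-a), -2*G]) = 0 := by
    rw [hMv, hF']
    funext i
    fin_cases i <;>
      simp [Matrix.mulVec, dotProduct, Fin.sum_univ_four, Matrix.sub_apply,
        Matrix.smul_apply, Matrix.one_apply, Matrix.vecHead, Matrix.vecTail] <;>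
      first
        | ring1
        | linear_combination (a-b) * hlam2 + (1/2) * hGrel
        | linear_combination 2*G*hlam2
  have hPd : IsUnit P.det := (Matrix.isUnit_iff_isUnit_det P).mp hP
  have hPP : P * P⁻¹ = 1 := Matrix.mul_nonsing_inv P hPd
  have hMdiag : F - lam • 1 = P * diagonal (fun i => D i - lam) * P⁻¹ := by
    have h1 : diagonal (fun i : Fin 4 => D i - lam) = diagonal D - lam • 1 := by
      ext i j
      rcases eq_or_ne i j with rfl | hij
      · simp [Matrix.diagonal_apply_eq, Matrix.sub_apply, Matrix.smul_apply,
          Matrix.one_apply_eq]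
      · simp [Matrix.diagonal_apply_ne _ hij, Matrix.sub_apply, Matrix.smul_apply,
          Matrix.one_apply_ne hij]
    rw [h1, hFPD, Matrix.mul_sub, Matrix.sub_mul]
    congr 1
    rw [Matrix.mul_smul, mul_one, Matrix.smul_mul, hPP]
  have hker := sq_ker P (fun i => D i - lam) hP ![4*lam, 0, 4*lam^2+(b-a), -2*G]
    (by rw [← hMdiag]; exact hMMv)
  rw [← hMdiag, hMv] at hker
  have hc := congrFun hker 0
  simp only [Matrix.cons_val_zero, Pi.zero_apply] at hc
  exact hab' hc
end

section
/- Let ω₁, ω₂ be positive real numbers with ω₁ ≠ ω₂ and let g be real, and let F be the complex 4×4 matrix F = [[0,0,1,0],[0,0,0,1],[−ω₁²,−ig,0,0],[−ig,−ω₂²,0,0]]. Then every eigenvalue λ ∈ ℂ of F is purely imaginary (Re λ = 0) if and only if −|ω₁² − ω₂²| ≤ 2g ≤ |ω₁² − ω₂²|. Moreover every eigenvalue of F is nonzero. -/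
open Matrix

/-- all eigenvalues of the fundamental matrix `F` of the
Cannata–Ioffe–Nishnianidze oscillator are purely imaginary iff
`−|ω₁² − ω₂²| ≤ 2g ≤ |ω₁² − ω₂²|`; moreover every eigenvalue of `F` is nonzero. -/
theorem stmt_18 (ω₁ ω₂ g : ℝ) (hω₁ : 0 < ω₁) (hω₂ : 0 < ω₂) (hne : ω₁ ≠ ω₂)
    (F : Matrix (Fin 4) (Fin 4) ℂ)
    (hF : F = !![0, 0, 1, 0;
                 0, 0, 0, 1;
                 -(ω₁ : ℂ) ^ 2, -Complex.I * g, 0, 0;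
                 -Complex.I * g, -(ω₂ : ℂ) ^ 2, 0, 0]) :
    ((∀ lam : ℂ, (F - lam • 1).det = 0 → lam.re = 0) ↔
      (-|ω₁ ^ 2 - ω₂ ^ 2| ≤ 2 * g ∧ 2 * g ≤ |ω₁ ^ 2 - ω₂ ^ 2|)) ∧
    (∀ lam : ℂ, (F - lam • 1).det = 0 → lam ≠ 0) := by
  subst hF
  have hdet : ∀ lam : ℂ,
      ((!![0, 0, 1, 0;
           0, 0, 0, 1;
           -(ω₁ : ℂ) ^ 2, -Complex.I * g, 0, 0;
           -Complex.I * g, -(ω₂ : ℂ) ^ 2, 0, 0] : Matrix (Fin 4) (Fin 4) ℂ) - lam • 1).det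
      = (lam ^ 2 + (ω₁ : ℂ) ^ 2) * (lam ^ 2 + (ω₂ : ℂ) ^ 2) + (g : ℂ) ^ 2 := by
    intro lam
    have h : ((!![0, 0, 1, 0;
                 0, 0, 0, 1;
                 -(ω₁ : ℂ) ^ 2, -Complex.I * g, 0, 0;
                 -Complex.I * g, -(ω₂ : ℂ) ^ 2, 0, 0] : Matrix (Fin 4) (Fin 4) ℂ) - lam • 1)
        = !![-lam, 0, 1, 0;
             0, -lam, 0, 1;
             -(ω₁ : ℂ) ^ 2, -Complex.I * g, -lam, 0;
             -Complex.I * g, -(ω₂ : ℂ) ^ 2, 0, -lam] := by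
      ext i j
      fin_cases i <;> fin_cases j <;>
        simp [Matrix.sub_apply, Matrix.smul_apply, Matrix.one_apply, Matrix.vecHead,
          Matrix.vecTail]
    rw [h]
    simp [Matrix.det_succ_row_zero, Fin.sum_univ_succ, Fin.succAbove, Matrix.vecHead,
      Matrix.vecTail]
    ring_nf
    simp [Complex.I_sq]
  constructor
  · constructor
    · -- forward: all roots imaginary → condition
      intro hall
      by_contra hcon
      rw [← abs_le, not_le] at hcon
      have hd2 : (ω₁ ^ 2 - ω₂ ^ 2) ^ 2 < (2 * g) ^ 2 := by
        have := mul_self_lt_mul_self (abs_nonneg _) hcon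
        simpa [← sq, sq_abs, mul_pow] using this
      set t : ℝ := Real.sqrt ((2 * g) ^ 2 - (ω₁ ^ 2 - ω₂ ^ 2) ^ 2) with ht
      have htpos : 0 < t := Real.sqrt_pos.mpr (by linarith)
      have ht2 : t ^ 2 = (2 * g) ^ 2 - (ω₁ ^ 2 - ω₂ ^ 2) ^ 2 :=
        Real.sq_sqrt (by linarith)
      have htc : (t : ℂ) ^ 2 = (2 * (g : ℂ)) ^ 2 - ((ω₁ : ℂ) ^ 2 - (ω₂ : ℂ) ^ 2) ^ 2 := by
        have := congrArg (fun x : ℝ => (x : ℂ)) ht2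
        push_cast at this
        linear_combination this
      set μ : ℂ := ((-(ω₁ ^ 2 + ω₂ ^ 2) / 2 : ℝ) : ℂ) + Complex.I * ((t / 2 : ℝ) : ℂ) with hμ
      obtain ⟨z, hz⟩ := IsAlgClosed.exists_pow_nat_eq μ (n := 2) (by norm_num)
      have hroot : (z ^ 2 + (ω₁ : ℂ) ^ 2) * (z ^ 2 + (ω₂ : ℂ) ^ 2) + (g : ℂ) ^ 2 = 0 := by
        rw [hz, hμ]
        push_cast
        linear_combination ((t : ℂ) ^ 2 / 4) * Complex.I_sq + (-1 / 4 : ℂ) * htc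
      have hzre : z.re = 0 := hall z (by rw [hdet]; exact hroot)
      have him1 : (z ^ 2).im = t / 2 := by
        rw [hz, hμ]; simp [← Complex.ofReal_pow]
      have him2 : (z ^ 2).im = 2 * z.re * z.im := by
        simp [pow_two, Complex.mul_im]; ring
      rw [him2, hzre] at him1
      simp at him1
      linarith
    · -- backward
      intro ⟨h1, h2⟩ lam hroot
      rw [hdet] at hroot
      have hd2 : (2 * g) ^ 2 ≤ (ω₁ ^ 2 - ω₂ ^ 2) ^ 2 := by
        have := sq_le_sq' h1 h2
        simpa [sq_abs] using this
      set u : ℝ := (lam ^ 2).re with hu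
      set v : ℝ := (lam ^ 2).im with hv
      have hre : (u + ω₁ ^ 2) * (u + ω₂ ^ 2) - v * v + g ^ 2 = 0 := by
        have := congrArg Complex.re hroot
        simp [Complex.add_re, Complex.mul_re, Complex.add_im, Complex.mul_im,
          ← Complex.ofReal_pow, ← hu, ← hv] at this
        linear_combination this
      have him : v * (u + ω₁ ^ 2) + v * (u + ω₂ ^ 2) = 0 := by
        have := congrArg Complex.im hroot
        simp [Complex.add_re, Complex.mul_re, Complex.add_im, Complex.mul_im,
          ← Complex.ofReal_pow, ← hu, ← hv] at this
        linear_combination this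
      have hv0 : v = 0 := by
        by_contra hv0
        have h2u : 2 * u + ω₁ ^ 2 + ω₂ ^ 2 = 0 := by
          have h' : v * (2 * u + ω₁ ^ 2 + ω₂ ^ 2) = 0 := by linarith [him]
          rcases mul_eq_zero.mp h' with h | h
          · exact absurd h hv0
          · exact h
        have hveq : v * v = g ^ 2 - (ω₁ ^ 2 - ω₂ ^ 2) ^ 2 / 4 := by
          linear_combination (-1) * hre + ((2 * u + ω₁ ^ 2 + ω₂ ^ 2) / 4) * h2u
        have := mul_self_pos.mpr hv0
        nlinarith [hd2]
      have hu0 : u < 0 := by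
        rw [hv0] at hre
        nlinarith [sq_nonneg g, mul_pos (mul_pos hω₁ hω₁) (mul_pos hω₂ hω₂), sq_nonneg u]
      have hure : u = lam.re ^ 2 - lam.im ^ 2 := by
        rw [hu, pow_two, pow_two, pow_two]; simp [Complex.mul_re]
      have hvim : v = 2 * lam.re * lam.im := by
        rw [hv, pow_two]; simp [Complex.mul_im]; ring
      rw [hvim] at hv0
      rcases mul_eq_zero.mp (by linarith : lam.re * lam.im = 0) with h | h
      · exact h
      · exfalso; rw [h] at hure; nlinarith [sq_nonneg lam.re]
  · -- nonzero
    intro lam hroot hlam0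
    rw [hdet, hlam0] at hroot
    have := congrArg Complex.re hroot
    simp [Complex.add_re, Complex.mul_re, ← Complex.ofReal_pow] at this
    nlinarith [mul_pos (mul_pos hω₁ hω₁) (mul_pos hω₂ hω₂), sq_nonneg g]
end

section
/- Let ω₁, ω₂ be positive real numbers with ω₁ ≠ ω₂ and let g be real with 2g = ω₁² − ω₂² or 2g = −(ω₁² − ω₂²), and let F be the complex 4×4 matrix F = [[0,0,1,0],[0,0,0,1],[−ω₁²,−ig,0,0],[−ig,−ω₂²,0,0]]. Set λ₊ = i·((ω₁² + ω₂²)/2)^{1/2}. Then λ₊ is an eigenvalue of F of algebraic multiplicity two, the matrix F − λ₊I has rank 3 (so the eigenspace ker(F − λ₊) is one-dimensional), and consequently F is not diagonalizable over ℂ, i.e. F has a Jordan block at λ₊. -/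
open Matrix

open Polynomial

lemma charpoly_conj_aux {n : Type*} [Fintype n] [DecidableEq n] (P M : Matrix n n ℂ)
    (hP : IsUnit P) : (P * M * P⁻¹).charpoly = M.charpoly := by
  have hdet : IsUnit P.det := (Matrix.isUnit_iff_isUnit_det P).mp hP
  have hPP : P * P⁻¹ = 1 := mul_nonsing_inv P hdet
  have h1 : charmatrix (P * M * P⁻¹)
      = ((C : ℂ →+* ℂ[X]).mapMatrix P) * charmatrix M * ((C : ℂ →+* ℂ[X]).mapMatrix P⁻¹) := by
    rw [charmatrix, charmatrix, Matrix.mul_sub, Matrix.sub_mul]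
    congr 1
    · rw [← (Matrix.scalar_commute (X : ℂ[X]) (fun r' => Commute.all _ _)
        ((C : ℂ →+* ℂ[X]).mapMatrix P)).eq]; rw [Matrix.mul_assoc, ← _root_.map_mul, hPP, _root_.map_one,
        Matrix.mul_one]
    · rw [← _root_.map_mul, ← _root_.map_mul]
  rw [Matrix.charpoly, Matrix.charpoly, h1, det_mul, det_mul]
  have h2 : ((C : ℂ →+* ℂ[X]).mapMatrix P).det * ((C : ℂ →+* ℂ[X]).mapMatrix P⁻¹).det = 1 := by
    rw [← det_mul, ← _root_.map_mul, hPP, _root_.map_one, det_one]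
  calc ((C : ℂ →+* ℂ[X]).mapMatrix P).det * (charmatrix M).det * ((C : ℂ →+* ℂ[X]).mapMatrix P⁻¹).det
      = (charmatrix M).det * (((C : ℂ →+* ℂ[X]).mapMatrix P).det * ((C : ℂ →+* ℂ[X]).mapMatrix P⁻¹).det) := by ring
    _ = (charmatrix M).det := by rw [h2, mul_one]

lemma charpoly_diag_aux {n : Type*} [Fintype n] [DecidableEq n] (D : n → ℂ) :
    (Matrix.diagonal D).charpoly = ∏ i, (X - C (D i)) := by
  have h : charmatrix (Matrix.diagonal D) = Matrix.diagonal (fun i => X - C (D i)) := by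
    ext i j
    by_cases hij : i = j
    · subst hij; simp [charmatrix_apply_eq]
    · simp [charmatrix_apply_ne _ _ _ hij, Matrix.diagonal_apply_ne _ hij,
        Matrix.diagonal_apply_ne' _ hij]
  rw [Matrix.charpoly, h, det_diagonal]

lemma charpoly_F_aux (a b c : ℂ) :
    (!![0,0,1,0;0,0,0,1;-a,c,0,0;c,-b,0,0] : Matrix (Fin 4) (Fin 4) ℂ).charpoly
      = X^4 + C (a+b) * X^2 + C (a*b - c^2) := by
  have hcm : charmatrix (!![0,0,1,0;0,0,0,1;-a,c,0,0;c,-b,0,0] : Matrix (Fin 4) (Fin 4) ℂ)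
      = !![X, 0, -1, 0; 0, X, 0, -1; C a, -C c, X, 0; -C c, C b, 0, X] := by
    apply Matrix.ext
    intro i j
    fin_cases i <;> fin_cases j <;>
      simp [charmatrix_apply, Matrix.diagonal_apply, Matrix.vecHead, Matrix.vecTail, Function.comp]
  rw [Matrix.charpoly, hcm]
  simp only [Matrix.det_succ_row_zero, Fin.sum_univ_succ, Fin.succ_zero_eq_one]
  norm_num [Fin.succAbove, Fin.lt_def, Matrix.det_fin_three]
  simp [Matrix.vecHead, Matrix.vecTail]
  ring

/-- at the exceptional coupling `2g = ±(ω₁² − ω₂²)`, the value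
`λ₊ = i((ω₁² + ω₂²)/2)^{1/2}` is an eigenvalue of `F` of algebraic multiplicity two,
`F − λ₊I` has rank 3 (so the eigenspace `ker(F − λ₊)` is one-dimensional), and `F` is
not diagonalizable over `ℂ`, i.e. `F` has a Jordan block at `λ₊`. -/
theorem stmt_19 (ω₁ ω₂ g : ℝ) (hω₁ : 0 < ω₁) (hω₂ : 0 < ω₂) (hne : ω₁ ≠ ω₂)
    (hg : 2 * g = ω₁ ^ 2 - ω₂ ^ 2 ∨ 2 * g = -(ω₁ ^ 2 - ω₂ ^ 2))
    (F : Matrix (Fin 4) (Fin 4) ℂ)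
    (hF : F = !![0, 0, 1, 0;
                 0, 0, 0, 1;
                 -(ω₁ : ℂ) ^ 2, -Complex.I * g, 0, 0;
                 -Complex.I * g, -(ω₂ : ℂ) ^ 2, 0, 0])
    (lamPlus : ℂ)
    (hlam : lamPlus = Complex.I * Real.sqrt ((ω₁ ^ 2 + ω₂ ^ 2) / 2)) :
    Polynomial.rootMultiplicity lamPlus F.charpoly = 2 ∧
    (F - lamPlus • 1).rank = 3 ∧
    Module.finrank ℂ (LinearMap.ker (Matrix.mulVecLin (F - lamPlus • 1))) = 1 ∧
    ¬∃ (P : Matrix (Fin 4) (Fin 4) ℂ) (D : Fin 4 → ℂ),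
        IsUnit P ∧ F = P * Matrix.diagonal D * P⁻¹ := by
  set a : ℂ := (ω₁ : ℂ)^2 with ha
  set b : ℂ := (ω₂ : ℂ)^2 with hb
  set c : ℂ := -Complex.I * (g : ℂ) with hc
  -- basic facts
  have hrpos : (0:ℝ) < (ω₁ ^ 2 + ω₂ ^ 2) / 2 := by positivity
  have hsc : lamPlus ^ 2 = -((a + b) / 2) := by
    rw [hlam, mul_pow, Complex.I_sq, ← Complex.ofReal_pow,
      Real.sq_sqrt hrpos.le, ha, hb]
    push_cast
    ring
  have hlne : lamPlus ≠ 0 := by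
    rw [hlam]
    exact mul_ne_zero Complex.I_ne_zero
      (by exact_mod_cast ne_of_gt (Real.sqrt_pos.mpr hrpos))
  have hq : ω₁ ^ 2 ≠ ω₂ ^ 2 := by
    intro h
    have h3 : (ω₁ - ω₂) * (ω₁ + ω₂) = 0 := by nlinarith
    rcases mul_eq_zero.mp h3 with h4 | h4
    · exact hne (by linarith)
    · linarith
  have hab : a ≠ b := by
    rw [ha, hb]
    intro h
    exact hq (by exact_mod_cast h)
  -- the special parameter e
  obtain ⟨e, hee, he1⟩ : ∃ e : ℂ, e ^ 2 = -1 ∧ c * e = (a - b) / 2 := by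
    rcases hg with h | h
    · refine ⟨Complex.I, Complex.I_sq, ?_⟩
      have hcast : (2 * g : ℂ) = a - b := by rw [ha, hb]; exact_mod_cast congrArg (Complex.ofReal) h
      rw [hc]
      linear_combination (-(g : ℂ)) * Complex.I_sq + (1/2 : ℂ) * hcast
    · refine ⟨-Complex.I, by rw [neg_pow]; rw [Complex.I_sq]; ring, ?_⟩
      have hcast : (2 * g : ℂ) = -(a - b) := by
        rw [ha, hb]; exact_mod_cast congrArg (Complex.ofReal) h
      rw [hc]
      linear_combination ((g : ℂ)) * Complex.I_sq + (-(1:ℂ)/2) * hcast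
  have hene : e ≠ 0 := by
    intro h; rw [h] at hee; norm_num at hee
  have hcne : c ≠ 0 := by
    intro h
    rw [h, zero_mul] at he1
    apply hab
    have : a - b = 0 := by linear_combination (-2 : ℂ) * he1
    linear_combination this
  -- key coefficient identity
  have hprod : (a * b - c ^ 2 : ℂ) = (lamPlus ^ 2) ^ 2 := by
    have hreal : (ω₁^2 * ω₂^2 + g^2 : ℝ) = ((ω₁^2 + ω₂^2)/2)^2 := by
      rcases hg with h | h <;> nlinarith [h]
    have hrealC : (a * b + (g:ℂ)^2) = ((a + b)/2)^2 := by
      rw [ha, hb]; exact_mod_cast congrArg (Complex.ofReal) hreal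
    have hcsq : c ^ 2 = -(g : ℂ)^2 := by
      rw [hc, mul_pow, neg_pow, Complex.I_sq]; ring
    rw [hcsq]
    linear_combination hrealC + ((a+b)/2 - lamPlus^2) * hsc
  clear_value a b c
  clear ha hb hc hlam
  -- charpoly
  have hcp : F.charpoly = (X - C lamPlus) ^ 2 * (X + C lamPlus) ^ 2 := by
    rw [hF, charpoly_F_aux]
    have h1 : (a + b : ℂ) = -2 * lamPlus ^ 2 := by linear_combination (2 : ℂ) * hsc
    rw [h1, hprod]
    simp only [_root_.map_mul, map_pow, _root_.map_neg, map_ofNat]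
    ring
  have hcpne : F.charpoly ≠ 0 := F.charpoly_monic.ne_zero
  have hrm : Polynomial.rootMultiplicity lamPlus F.charpoly = 2 := by
    rw [hcp] at hcpne ⊢
    rw [Polynomial.rootMultiplicity_mul hcpne]
    rw [Polynomial.rootMultiplicity_X_sub_C_pow]
    have h0 : Polynomial.rootMultiplicity lamPlus ((X + C lamPlus) ^ 2) = 0 := by
      apply Polynomial.rootMultiplicity_eq_zero
      simp only [Polynomial.IsRoot, Polynomial.eval_pow, Polynomial.eval_add,
        Polynomial.eval_X, Polynomial.eval_C]
      intro h
      have h2 : lamPlus + lamPlus = 0 := by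
        have := pow_eq_zero_iff (n := 2) (by norm_num) |>.mp h
        exact this
      exact hlne (by linear_combination (1/2 : ℂ) * h2)
    rw [h0]
  -- explicit matrix for F - lamPlus • 1
  have hM : F - lamPlus • 1
      = !![-lamPlus, 0, 1, 0; 0, -lamPlus, 0, 1; -a, c, -lamPlus, 0; c, -b, 0, -lamPlus] := by
    rw [hF]
    apply Matrix.ext
    intro i j
    fin_cases i <;> fin_cases j <;>
      simp [Matrix.sub_apply, Matrix.smul_apply, Matrix.one_apply, Matrix.vecHead, Matrix.vecTail]
  -- kernel
  set v₀ : Fin 4 → ℂ := ![1, e, lamPlus, e * lamPlus] with hv₀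
  have hv₀ne : v₀ ≠ 0 := by
    intro h
    have := congrFun h 0
    simp [hv₀] at this
  have hker : LinearMap.ker (Matrix.mulVecLin (F - lamPlus • 1)) = Submodule.span ℂ {v₀} := by
    apply le_antisymm
    · intro x hx
      rw [LinearMap.mem_ker, Matrix.mulVecLin_apply, hM] at hx
      have h0 := congrFun hx 0
      have h1 := congrFun hx 1
      have h2 := congrFun hx 2
      simp only [Matrix.mulVec, dotProduct, Fin.sum_univ_four] at h0 h1 h2
      simp [Matrix.vecHead, Matrix.vecTail] at h0 h1 h2
      have hx2 : x 2 = lamPlus * x 0 := by linear_combination h0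
      have hx3 : x 3 = lamPlus * x 1 := by linear_combination h1
      have hx1 : x 1 = e * x 0 := by
        apply mul_left_cancel₀ hcne
        linear_combination h2 + lamPlus * h0 + x 0 * hsc + (- x 0) * he1
      rw [Submodule.mem_span_singleton]
      refine ⟨x 0, ?_⟩
      funext i
      fin_cases i <;> simp [hv₀]
      · linear_combination -hx1
      · linear_combination -hx2
      · rw [hx3, hx1]; ring
    · rw [Submodule.span_le, Set.singleton_subset_iff]
      rw [SetLike.mem_coe, LinearMap.mem_ker, Matrix.mulVecLin_apply, hM]
      funext i
      fin_cases i <;>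
        simp only [Matrix.mulVec, dotProduct, Fin.sum_univ_four, hv₀] <;> simp
      · ring
      · linear_combination he1 - hsc
      · linear_combination (-e) * hsc + (-e) * he1 + c * hee
  have hkerdim : Module.finrank ℂ (LinearMap.ker (Matrix.mulVecLin (F - lamPlus • 1))) = 1 := by
    rw [hker]
    exact finrank_span_singleton hv₀ne
  have hrank : (F - lamPlus • 1).rank = 3 := by
    have hrn := LinearMap.finrank_range_add_finrank_ker (Matrix.mulVecLin (F - lamPlus • 1))
    rw [hkerdim] at hrn
    have h4 : Module.finrank ℂ (Fin 4 → ℂ) = 4 := by simp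
    rw [h4] at hrn
    rw [Matrix.rank]
    omega
  refine ⟨hrm, hrank, hkerdim, ?_⟩
  rintro ⟨P, D, hP, hFeq⟩
  have hdet : IsUnit P.det := (Matrix.isUnit_iff_isUnit_det P).mp hP
  have hPP : P * P⁻¹ = 1 := mul_nonsing_inv P hdet
  -- algebraic multiplicity 2 forces exactly two diagonal entries equal lamPlus
  have hchar : F.charpoly = ∏ i, (X - C (D i)) := by
    rw [hFeq, charpoly_conj_aux _ _ hP, charpoly_diag_aux]
  have hcount : (Multiset.map D Finset.univ.val).count lamPlus = 2 := by
    rw [← hrm, hchar]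
    have : (∏ i, (X - C (D i)) : ℂ[X])
        = ((Multiset.map D Finset.univ.val).map fun a => X - C a).prod := by
      rw [Multiset.map_map]
      rfl
    rw [this, ← Polynomial.count_roots, Polynomial.roots_multiset_prod_X_sub_C]
  -- rank 3 forces exactly one diagonal entry equal lamPlus
  have hdiag : F - lamPlus • 1 = P * Matrix.diagonal (fun i => D i - lamPlus) * P⁻¹ := by
    rw [hFeq]
    have hd : Matrix.diagonal (fun i => D i - lamPlus)
        = Matrix.diagonal D - lamPlus • 1 := by
      ext i j
      by_cases h : i = j
      · subst h; simp [Matrix.one_apply_eq]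
      · simp [Matrix.diagonal_apply_ne _ h, Matrix.one_apply_ne h]
    rw [hd, Matrix.mul_sub, Matrix.sub_mul, Matrix.mul_smul, Matrix.mul_one, Matrix.smul_mul, hPP]
  have hrankd : (Matrix.diagonal (fun i => D i - lamPlus)).rank = 3 := by
    rw [← hrank, hdiag, Matrix.rank_mul_eq_left_of_isUnit_det _ _ (isUnit_nonsing_inv_det P hdet),
      Matrix.rank_mul_eq_right_of_isUnit_det _ _ hdet]
  rw [Matrix.rank_diagonal] at hrankd
  -- translate counts
  have hcard2 : (Finset.univ.filter (fun i => lamPlus = D i)).card = 2 := by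
    rw [← hcount, Multiset.count_map]
    rfl
  have hcard1 : (Finset.univ.filter (fun i => ¬ lamPlus = D i)).card = 3 := by
    rw [← hrankd, Fintype.card_subtype]
    congr 1
    apply Finset.filter_congr
    intro i _
    simp [sub_eq_zero, eq_comm]
  have := Finset.card_filter_add_card_filter_not
    (s := (Finset.univ : Finset (Fin 4))) (p := fun i => lamPlus = D i)
  simp only [Finset.card_univ, Fintype.card_fin] at this
  omega
end
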